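/- arXiv:1709.00826 — 4 statements merged into one kernel-verified Lean document; each statement's English description precedes it below -/
import Mathlib

section
/- The encoding of CCS with signals into a process algebra without an emission predicate, obtained by replacing the predicate P ↷ s with a self-loop transition P →s̄ P (i.e., changing the rule (P^s) ↷ s into P^s →s̄ P^s and treating all other emission rules as ordinary transition rules), preserves and reflects strong bisimilarity: two CCSS processes are bisimilar in the original semantics (matching transitions and emitted signals) iff they are bisimilar in the encoded semantics (matching transitions only). -/
namespace CCSS

/-- Actions of CCS with signals: handshake names, conames, signal reads, and τ. -/
inductive Act (Name Sig : Type) : Type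
  | name : Name → Act Name Sig
  | coname : Name → Act Name Sig
  | sig : Sig → Act Name Sig
  | tau : Act Name Sig

namespace Act
variable {Name Sig : Type}

/-- Relabelling applied to an action. -/
def comap (f : Name → Name) (g : Sig → Sig) : Act Name Sig → Act Name Sig
  | name a => name (f a)
  | coname a => coname (f a)
  | sig s => sig (g s)
  | tau => tau

/-- Whether an action is permitted under a restriction set `L` of names and signals. -/
def allowed (L : Set (Name ⊕ Sig)) : Act Name Sig → Prop
  | name a => Sum.inl a ∉ L
  | coname a => Sum.inl a ∉ L
  | sig s => Sum.inr s ∉ L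
  | tau => True

end Act

/-- Process expressions of CCS with signals. -/
inductive Proc (Name Sig Ident : Type) : Type 1
  | ident : Ident → Proc Name Sig Ident
  | pre : Act Name Sig → Proc Name Sig Ident → Proc Name Sig Ident
  | choice : (I : Type) → (I → Proc Name Sig Ident) → Proc Name Sig Ident
  | par : Proc Name Sig Ident → Proc Name Sig Ident → Proc Name Sig Ident
  | res : Proc Name Sig Ident → Set (Name ⊕ Sig) → Proc Name Sig Ident
  | rel : Proc Name Sig Ident → (Name → Name) → (Sig → Sig) → Proc Name Sig Ident
  | sigop : Proc Name Sig Ident → Sig → Proc Name Sig Ident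

variable {Name Sig Ident : Type}

/-- The inactive process 0. -/
def Proc.nil : Proc Name Sig Ident := .choice Empty (fun e => e.elim)

/-- Binary choice P + Q. -/
def Proc.cplus (P Q : Proc Name Sig Ident) : Proc Name Sig Ident :=
  .choice Bool (fun b => if b then P else Q)

/-- The signal-emission predicate P ↷ s. -/
inductive Emits (env : Ident → Proc Name Sig Ident) : Proc Name Sig Ident → Sig → Prop
  | sigop {P : Proc Name Sig Ident} {s : Sig} : Emits env (.sigop P s) s
  | sigop_lift {P : Proc Name Sig Ident} {s t : Sig} :
      Emits env P s → Emits env (.sigop P t) s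
  | choice {I : Type} {f : I → Proc Name Sig Ident} {j : I} {s : Sig} :
      Emits env (f j) s → Emits env (.choice I f) s
  | parL {P Q : Proc Name Sig Ident} {s : Sig} : Emits env P s → Emits env (.par P Q) s
  | parR {P Q : Proc Name Sig Ident} {s : Sig} : Emits env Q s → Emits env (.par P Q) s
  | res {P : Proc Name Sig Ident} {L : Set (Name ⊕ Sig)} {s : Sig} :
      Emits env P s → Sum.inr s ∉ L → Emits env (.res P L) s
  | rel {P : Proc Name Sig Ident} {f : Name → Name} {g : Sig → Sig} {s : Sig} :
      Emits env P s → Emits env (.rel P f g) (g s)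
  | ident {A : Ident} {s : Sig} : Emits env (env A) s → Emits env (.ident A) s

/-- The labelled transition relation of CCS with signals. -/
inductive Trans (env : Ident → Proc Name Sig Ident) :
    Proc Name Sig Ident → Act Name Sig → Proc Name Sig Ident → Prop
  | pre {α : Act Name Sig} {P : Proc Name Sig Ident} : Trans env (.pre α P) α P
  | choice {I : Type} {f : I → Proc Name Sig Ident} {j : I} {α P'} :
      Trans env (f j) α P' → Trans env (.choice I f) α P'
  | parL {P Q α P'} : Trans env P α P' → Trans env (.par P Q) α (.par P' Q)
  | parR {P Q α Q'} : Trans env Q α Q' → Trans env (.par P Q) α (.par P Q')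
  | sync1 {P Q a P' Q'} : Trans env P (.name a) P' → Trans env Q (.coname a) Q' →
      Trans env (.par P Q) .tau (.par P' Q')
  | sync2 {P Q a P' Q'} : Trans env P (.coname a) P' → Trans env Q (.name a) Q' →
      Trans env (.par P Q) .tau (.par P' Q')
  | sigL {P Q s Q'} : Emits env P s → Trans env Q (.sig s) Q' →
      Trans env (.par P Q) .tau (.par P Q')
  | sigR {P Q s P'} : Trans env P (.sig s) P' → Emits env Q s →
      Trans env (.par P Q) .tau (.par P' Q)
  | res {P α P' L} : Trans env P α P' → Act.allowed L α → Trans env (.res P L) α (.res P' L)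
  | rel {P α P' f g} : Trans env P α P' →
      Trans env (.rel P f g) (Act.comap f g α) (.rel P' f g)
  | ident {A α P'} : Trans env (env A) α P' → Trans env (.ident A) α P'

/-- A strong bisimulation for CCSS: matches transitions and emitted signals. -/
def IsBisimulation (env : Ident → Proc Name Sig Ident)
    (R : Proc Name Sig Ident → Proc Name Sig Ident → Prop) : Prop :=
  ∀ P Q, R P Q →
    (∀ α P', Trans env P α P' → ∃ Q', Trans env Q α Q' ∧ R P' Q') ∧
    (∀ α Q', Trans env Q α Q' → ∃ P', Trans env P α P' ∧ R P' Q') ∧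
    (∀ s, Emits env P s ↔ Emits env Q s)

/-- Strong bisimilarity on CCSS processes. -/
def Bisim (env : Ident → Proc Name Sig Ident) (P Q : Proc Name Sig Ident) : Prop :=
  ∃ R, IsBisimulation env R ∧ R P Q

end CCSS

namespace CCSS

variable {Name Sig Ident : Type}

/-- Labels of the encoded calculus: ordinary actions plus the co-signals s̄. -/
abbrev ELabel (Name Sig : Type) := Act Name Sig ⊕ Sig

/-- The encoded transition relation: ordinary transitions, plus a self-loop
`P →s̄ P` whenever `P ↷ s` (the rule (P^s) ↷ s becomes P^s →s̄ P^s, and the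
emission-propagation rules become instances of the ordinary transition rules). -/
def ETrans (env : Ident → Proc Name Sig Ident) :
    Proc Name Sig Ident → ELabel Name Sig → Proc Name Sig Ident → Prop :=
  fun P l P' =>
    (∃ α : Act Name Sig, l = Sum.inl α ∧ Trans env P α P') ∨
    (∃ s : Sig, l = Sum.inr s ∧ Emits env P s ∧ P' = P)

/-- Bisimulations of the encoded calculus match transitions only. -/
def IsEBisimulation (env : Ident → Proc Name Sig Ident)
    (R : Proc Name Sig Ident → Proc Name Sig Ident → Prop) : Prop :=
  ∀ P Q, R P Q →
    (∀ l P', ETrans env P l P' → ∃ Q', ETrans env Q l Q' ∧ R P' Q') ∧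
    (∀ l Q', ETrans env Q l Q' → ∃ P', ETrans env P l P' ∧ R P' Q')

def EBisim (env : Ident → Proc Name Sig Ident) (P Q : Proc Name Sig Ident) : Prop :=
  ∃ R, IsEBisimulation env R ∧ R P Q

/-- the encoding of emission predicates as self-loop transitions
preserves and reflects strong bisimilarity. -/
theorem encoding_preserves_reflects_bisim
    (env : Ident → Proc Name Sig Ident) (P Q : Proc Name Sig Ident) :
    Bisim env P Q ↔ EBisim env P Q := by
  constructor
  · rintro ⟨R, hR, hPQ⟩
    refine ⟨R, ?_, hPQ⟩
    intro A B hAB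
    obtain ⟨h1, h2, h3⟩ := hR A B hAB
    constructor
    · rintro l A' (⟨α, rfl, h⟩ | ⟨s, rfl, hem, rfl⟩)
      · obtain ⟨B', hB', hR'⟩ := h1 α A' h
        exact ⟨B', Or.inl ⟨α, rfl, hB'⟩, hR'⟩
      · exact ⟨B, Or.inr ⟨s, rfl, (h3 s).mp hem, rfl⟩, hAB⟩
    · rintro l B' (⟨α, rfl, h⟩ | ⟨s, rfl, hem, rfl⟩)
      · obtain ⟨A', hA', hR'⟩ := h2 α B' h
        exact ⟨A', Or.inl ⟨α, rfl, hA'⟩, hR'⟩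
      · exact ⟨A, Or.inr ⟨s, rfl, (h3 s).mpr hem, rfl⟩, hAB⟩
  · rintro ⟨R, hR, hPQ⟩
    refine ⟨R, ?_, hPQ⟩
    intro A B hAB
    obtain ⟨h1, h2⟩ := hR A B hAB
    refine ⟨?_, ?_, ?_⟩
    · intro α A' h
      obtain ⟨B', hB', hR'⟩ := h1 (Sum.inl α) A' (Or.inl ⟨α, rfl, h⟩)
      rcases hB' with ⟨β, hβ, ht⟩ | ⟨s, hs, _⟩
      · exact ⟨B', by cases hβ; exact ht, hR'⟩
      · simp at hs
    · intro α B' h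
      obtain ⟨A', hA', hR'⟩ := h2 (Sum.inl α) B' (Or.inl ⟨α, rfl, h⟩)
      rcases hA' with ⟨β, hβ, ht⟩ | ⟨s, hs, _⟩
      · exact ⟨A', by cases hβ; exact ht, hR'⟩
      · simp at hs
    · intro s
      constructor
      · intro hem
        obtain ⟨B', hB', _⟩ := h1 (Sum.inr s) A (Or.inr ⟨s, rfl, hem, rfl⟩)
        rcases hB' with ⟨β, hβ, _⟩ | ⟨t, ht, hem', _⟩
        · simp at hβ
        · cases ht; exact hem'
      · intro hem
        obtain ⟨A', hA', _⟩ := h2 (Sum.inr s) B (Or.inr ⟨s, rfl, hem, rfl⟩)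
        rcases hA' with ⟨β, hβ, _⟩ | ⟨t, ht, hem', _⟩
        · simp at hβ
        · cases ht; exact hem'

end CCSS
end

section
/- In the corresponding pure-CCS one-writer example (with read actions a̅ss/not modelled as handshakes rather than signals), the infinite path consisting solely of the reader's τ-loop (reading x forever, never performing the write) is ∅-just, hence just; so justness does not guarantee that the writer's action eventually occurs. -/
namespace CCSS

variable {Name Sig Ident : Type}

/-- A (finite or infinite) path: `len` transitions, with `state n` and `act n`
the n-th state and action. For a finite path of length `k`, only positions
`n ≤ k` (states) and `n < k` (actions) are relevant. -/
structure Path (env : Ident → Proc Name Sig Ident) : Type 1 where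
  len : ℕ∞
  state : ℕ → Proc Name Sig Ident
  act : ℕ → Act Name Sig
  valid : ∀ n : ℕ, (n : ℕ∞) < len → Trans env (state n) (act n) (state (n + 1))

/-- The suffix of a path obtained by removing the first `k` transitions. -/
def Path.drop {env : Ident → Proc Name Sig Ident} (π : Path env) (k : ℕ) : Path env where
  len := π.len - k
  state n := π.state (n + k)
  act n := π.act (n + k)
  valid n h := by
    have h' : ((n + k : ℕ) : ℕ∞) < π.len := by
      have := lt_tsub_iff_right.mp h
      exact_mod_cast this
    have := π.valid (n + k) h'
    simpa [Nat.add_right_comm] using this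

/-- `IsParDecomp env π πP πQ` : the path `π` of a parallel composition decomposes
into the path `πP` of the left component and `πQ` of the right component.
`g n` (resp. `h n`) counts the transitions of the left (resp. right) component
among the first `n` transitions of `π`; in a signal communication the
decomposition along the emitting component is empty. -/
def IsParDecomp (env : Ident → Proc Name Sig Ident) (π πP πQ : Path env) : Prop :=
  ∃ g h : ℕ → ℕ, g 0 = 0 ∧ h 0 = 0 ∧
    (∀ n : ℕ, (n : ℕ∞) ≤ π.len →
      π.state n = .par (πP.state (g n)) (πQ.state (h n))) ∧
    (∀ n : ℕ, (n : ℕ∞) < π.len →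
      (g (n+1) = g n + 1 ∧ h (n+1) = h n ∧ πP.act (g n) = π.act n) ∨
      (g (n+1) = g n ∧ h (n+1) = h n + 1 ∧ πQ.act (h n) = π.act n) ∨
      (g (n+1) = g n + 1 ∧ h (n+1) = h n + 1 ∧ π.act n = .tau ∧
        ∃ a : Name, (πP.act (g n) = .name a ∧ πQ.act (h n) = .coname a) ∨
                    (πP.act (g n) = .coname a ∧ πQ.act (h n) = .name a)) ∨
      (g (n+1) = g n ∧ h (n+1) = h n + 1 ∧ π.act n = .tau ∧
        ∃ s : Sig, Emits env (πP.state (g n)) s ∧ πQ.act (h n) = .sig s) ∨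
      (g (n+1) = g n + 1 ∧ h (n+1) = h n ∧ π.act n = .tau ∧
        ∃ s : Sig, Emits env (πQ.state (h n)) s ∧ πP.act (g n) = .sig s)) ∧
    πP.len = (⨆ n : {n : ℕ // (n : ℕ∞) ≤ π.len}, ((g n.1 : ℕ) : ℕ∞)) ∧
    πQ.len = (⨆ n : {n : ℕ // (n : ℕ∞) ≤ π.len}, ((h n.1 : ℕ) : ℕ∞))

/-- Decomposition of a path of `P\L` into a path of `P`. -/
def IsResDecomp (env : Ident → Proc Name Sig Ident) (π π' : Path env)
    (L : Set (Name ⊕ Sig)) : Prop :=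
  π'.len = π.len ∧
  (∀ n : ℕ, (n : ℕ∞) ≤ π.len → π.state n = .res (π'.state n) L) ∧
  (∀ n : ℕ, (n : ℕ∞) < π.len → π'.act n = π.act n)

/-- Decomposition of a path of `P[f]` into a path of `P`. -/
def IsRelDecomp (env : Ident → Proc Name Sig Ident) (π π' : Path env)
    (f : Name → Name) (g : Sig → Sig) : Prop :=
  π'.len = π.len ∧
  (∀ n : ℕ, (n : ℕ∞) ≤ π.len → π.state n = .rel (π'.state n) f g) ∧
  (∀ n : ℕ, (n : ℕ∞) < π.len → π.act n = Act.comap f g (π'.act n))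

/-- The set of actions L ∪ L̄_H induced by a restriction set L. -/
def actsOf (L : Set (Name ⊕ Sig)) : Set (Act Name Sig) :=
  {α | ∃ a, Sum.inl a ∈ L ∧ (α = .name a ∨ α = .coname a)} ∪
  {α | ∃ s, Sum.inr s ∈ L ∧ α = .sig s}

/-- The defining clauses of the family of Y-signalling paths, as a closure
property of a family `C`; `Y`-signalling is the greatest such family. -/
def SignallingClosed (env : Ident → Proc Name Sig Ident)
    (C : Path env → Set Sig → Prop) : Prop :=
  ∀ π Y, C π Y →
    (∀ k : ℕ, π.len = (k : ℕ∞) → ∀ s, Emits env (π.state k) s → s ∈ Y) ∧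
    (∀ P Q, π.state 0 = .par P Q →
      ∃ πP πQ X Z, IsParDecomp env π πP πQ ∧ C πP X ∧ C πQ Z ∧ X ∪ Z ⊆ Y) ∧
    (∀ P L, π.state 0 = .res P L →
      ∃ π', IsResDecomp env π π' L ∧ C π' (Y ∪ {s | Sum.inr s ∈ L})) ∧
    (∀ P f g, π.state 0 = .rel P f g →
      ∃ π', IsRelDecomp env π π' f g ∧ C π' (g ⁻¹' Y)) ∧
    (∀ k : ℕ, C (π.drop k) Y)

/-- `π` is a `Y`-signalling path (coinductively: member of the largest class
closed under the defining clauses). -/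
def Signalling (env : Ident → Proc Name Sig Ident) (π : Path env) (Y : Set Sig) : Prop :=
  ∃ C, SignallingClosed env C ∧ C π Y

/-- The defining clauses of the family of Y-just paths, as a closure property
of a family `C`; `Y`-justness is the greatest such family. -/
def JustClosed (env : Ident → Proc Name Sig Ident)
    (C : Path env → Set (Act Name Sig) → Prop) : Prop :=
  ∀ π Y, C π Y →
    (∀ k : ℕ, π.len = (k : ℕ∞) → ∀ α P', Trans env (π.state k) α P' → α ∈ Y) ∧
    (∀ P Q, π.state 0 = .par P Q →
      ∃ πP πQ X Z X' Z', IsParDecomp env π πP πQ ∧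
        C πP X ∧ C πQ Z ∧ Signalling env πP X' ∧ Signalling env πQ Z' ∧
        X ∪ Z ⊆ Y ∧
        (∀ a : Name, Act.name a ∈ X → Act.coname a ∉ Z) ∧
        (∀ a : Name, Act.coname a ∈ X → Act.name a ∉ Z) ∧
        (∀ s ∈ Z', Act.sig s ∉ X) ∧
        (∀ s ∈ X', Act.sig s ∉ Z)) ∧
    (∀ P L, π.state 0 = .res P L →
      ∃ π', IsResDecomp env π π' L ∧ C π' (Y ∪ actsOf L)) ∧
    (∀ P f g, π.state 0 = .rel P f g →
      ∃ π', IsRelDecomp env π π' f g ∧ C π' (Act.comap f g ⁻¹' Y)) ∧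
    (∀ k : ℕ, C (π.drop k) Y)

/-- `π` is a `Y`-just path. -/
def Just (env : Ident → Proc Name Sig Ident) (π : Path env)
    (Y : Set (Act Name Sig)) : Prop :=
  ∃ C, JustClosed env C ∧ C π Y

/-- `π` is just: `Y`-just for some set `Y` of blocking actions (τ is non-blocking). -/
def IsJust (env : Ident → Proc Name Sig Ident) (π : Path env) : Prop :=
  ∃ Y : Set (Act Name Sig), Act.tau ∉ Y ∧ Just env π Y

end CCSS

namespace CCSS
namespace CCSOneWriter

/-- Pure CCS: notifications are handshake names, there are no signals. -/
inductive N | ass (b : Bool) | note (b : Bool)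
inductive Id | xT | xF | R | W

abbrev P7 := Proc N Empty Id

/-- x_true = ass(x,true).x_true + ass(x,false).x_false + n̅ot(x,true).x_true,
x_false symmetric, R = not(x,true).R, W = a̅ss(x,false).0. -/
def env : Id → P7
  | .xT => Proc.cplus (.pre (.name (.ass true)) (.ident .xT))
            (Proc.cplus (.pre (.name (.ass false)) (.ident .xF))
                        (.pre (.coname (.note true)) (.ident .xT)))
  | .xF => Proc.cplus (.pre (.name (.ass true)) (.ident .xT))
            (Proc.cplus (.pre (.name (.ass false)) (.ident .xF))
                        (.pre (.coname (.note false)) (.ident .xF)))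
  | .R => .pre (.name (.note true)) (.ident .R)
  | .W => .pre (.coname (.ass false)) Proc.nil

/-- L = {ass(x,true), ass(x,false), not(x,true), not(x,false)}. -/
def L : Set (N ⊕ Empty) := Set.univ

/-- The system (x_true | R | W)\L. -/
def Sys : P7 := .res (.par (.par (.ident .xT) (.ident .R)) (.ident .W)) L

/-! ### Auxiliary material for the proof -/

/-- The reader's transition R --not(x,true)--> R. -/
lemma t_R : Trans env (.ident .R) (.name (.note true)) (.ident .R) :=
  .ident (by show Trans env (.pre _ _) _ _; exact .pre)

/-- The memory's transition x_true --n̅ot(x,true)--> x_true. -/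
lemma t_xT : Trans env (.ident .xT) (.coname (.note true)) (.ident .xT) := by
  refine .ident ?_
  show Trans env (Proc.cplus _ _) _ _
  refine .choice (j := false) ?_
  show Trans env (Proc.cplus _ _) _ _
  exact .choice (j := false) .pre

/-- The τ-loop of x_true | R. -/
lemma t2 : Trans env (.par (.ident .xT) (.ident .R)) .tau
    (.par (.ident .xT) (.ident .R)) := .sync2 t_xT t_R

lemma t1 : Trans env (.par (.par (.ident .xT) (.ident .R)) (.ident .W)) .tau
    (.par (.par (.ident .xT) (.ident .R)) (.ident .W)) := .parL t2

lemma t0 : Trans env Sys .tau Sys := .res t1 trivial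

/-- An infinite path that constantly loops at state `s` with action `a`. -/
def loopPath (s : P7) (a : Act N Empty) (h : Trans env s a s) : Path env where
  len := ⊤
  state _ := s
  act _ := a
  valid _ _ := h

/-- The empty path at the writer `W`. -/
def wPath : Path env where
  len := 0
  state _ := .ident .W
  act _ := .tau
  valid n h := absurd h (by simp)

/-- Shape of a constant infinite loop path. -/
def Sh (s : P7) (a : Act N Empty) (π : Path env) : Prop :=
  π.len = ⊤ ∧ (∀ n, π.state n = s) ∧ (∀ n, π.act n = a)

/-- Shape of an empty path stuck at `W`. -/
def Sh5 (π : Path env) : Prop :=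
  π.len = 0 ∧ ∀ n, π.state n = .ident .W

lemma sh_loop (s a h) : Sh s a (loopPath s a h) :=
  ⟨rfl, fun _ => rfl, fun _ => rfl⟩

lemma sh5_w : Sh5 wPath := ⟨rfl, fun _ => rfl⟩

lemma sh_drop {s a π} (h : Sh s a π) (k : ℕ) : Sh s a (π.drop k) :=
  ⟨by simp [Path.drop, h.1], fun n => h.2.1 _, fun n => h.2.2 _⟩

lemma sh5_drop {π} (h : Sh5 π) (k : ℕ) : Sh5 (π.drop k) :=
  ⟨by simp [Path.drop, h.1, zero_tsub], fun n => h.2 _⟩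

lemma isup_id {π : Path env} (h : π.len = ⊤) :
    (⨆ n : {n : ℕ // (n : ℕ∞) ≤ π.len}, ((n.1 : ℕ) : ℕ∞)) = ⊤ := by
  rw [iSup_eq_top]
  intro b hb
  lift b to ℕ using hb.ne
  exact ⟨⟨b + 1, by simp [h]⟩, by exact_mod_cast Nat.lt_succ_self b⟩

lemma isup_zero {π : Path env} :
    (⨆ n : {n : ℕ // (n : ℕ∞) ≤ π.len}, ((0 : ℕ) : ℕ∞)) = 0 := by
  haveI : Nonempty {n : ℕ // (n : ℕ∞) ≤ π.len} := ⟨⟨0, by simp⟩⟩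
  simp

/-- Decompose a loop at `(x_true|R)|W` into the loop at `x_true|R` and the
empty path at `W`. -/
lemma decomp1 {π : Path env}
    (h : Sh (.par (.par (.ident .xT) (.ident .R)) (.ident .W)) .tau π) :
    IsParDecomp env π (loopPath _ _ t2) wPath := by
  refine ⟨id, fun _ => 0, rfl, rfl, ?_, ?_, ?_, ?_⟩
  · intro n _; simp [h.2.1 n, loopPath, wPath]
  · intro n _
    exact Or.inl ⟨rfl, rfl, (h.2.2 n).symm⟩
  · exact ((isup_id h.1).symm : _)
  · exact (isup_zero.symm : _)

/-- Decompose a loop at `x_true|R` into loops of the components. -/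
lemma decomp2 {π : Path env}
    (h : Sh (.par (.ident .xT) (.ident .R)) .tau π) :
    IsParDecomp env π (loopPath _ _ t_xT) (loopPath _ _ t_R) := by
  refine ⟨id, id, rfl, rfl, ?_, ?_, ?_, ?_⟩
  · intro n _; simp [h.2.1 n, loopPath]
  · intro n _
    exact Or.inr (Or.inr (Or.inl ⟨rfl, rfl, h.2.2 n,
      .note true, Or.inr ⟨rfl, rfl⟩⟩))
  · exact ((isup_id h.1).symm : _)
  · exact ((isup_id h.1).symm : _)

/-- Signalling family: since there are no signals, any of our shapes is
signalling for any `Y`. -/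
def CS (π : Path env) (_ : Set Empty) : Prop :=
  Sh (.par (.ident .xT) (.ident .R)) .tau π ∨
  Sh (.ident .xT) (.coname (.note true)) π ∨
  Sh (.ident .R) (.name (.note true)) π ∨ Sh5 π

lemma CS_closed : SignallingClosed env CS := by
  rintro π Y hπ
  refine ⟨fun _ _ s _ => s.elim, ?_, ?_, ?_, ?_⟩
  · intro P Q hPQ
    rcases hπ with h | h | h | h
    · exact ⟨loopPath _ _ t_xT, loopPath _ _ t_R, ∅, ∅, decomp2 h,
        Or.inr (Or.inl (sh_loop _ _ _)), Or.inr (Or.inr (Or.inl (sh_loop _ _ _))),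
        by simp⟩
    · rw [h.2.1 0] at hPQ; simp at hPQ
    · rw [h.2.1 0] at hPQ; simp at hPQ
    · rw [h.2 0] at hPQ; simp at hPQ
  · intro P L' hP
    rcases hπ with h | h | h | h
    all_goals first
      | (rw [h.2.1 0] at hP; simp at hP)
      | (rw [h.2 0] at hP; simp at hP)
  · intro P f g hP
    rcases hπ with h | h | h | h
    all_goals first
      | (rw [h.2.1 0] at hP; simp at hP)
      | (rw [h.2 0] at hP; simp at hP)
  · intro k
    rcases hπ with h | h | h | h
    · exact Or.inl (sh_drop h k)
    · exact Or.inr (Or.inl (sh_drop h k))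
    · exact Or.inr (Or.inr (Or.inl (sh_drop h k)))
    · exact Or.inr (Or.inr (Or.inr (sh5_drop h k)))

lemma sig_of_CS {π Y} (h : CS π Y) : Signalling env π Y := ⟨CS, CS_closed, h⟩

/-- The justness family. -/
def CJ (π : Path env) (Y : Set (Act N Empty)) : Prop :=
  (Sh Sys .tau π ∧ Y = ∅) ∨
  (Sh (.par (.par (.ident .xT) (.ident .R)) (.ident .W)) .tau π ∧ Y = ∅ ∪ actsOf L) ∨
  (Sh (.par (.ident .xT) (.ident .R)) .tau π ∧ Y = ∅) ∨
  (Sh (.ident .xT) (.coname (.note true)) π ∧ Y = ∅) ∨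
  (Sh (.ident .R) (.name (.note true)) π ∧ Y = ∅) ∨
  (Sh5 π ∧ Y = {Act.coname (.ass false)})

lemma CJ_closed : JustClosed env CJ := by
  rintro π Y hπ
  refine ⟨?_, ?_, ?_, ?_, ?_⟩
  · -- final-state clause
    intro k hk α P' hT
    rcases hπ with ⟨h, hY⟩ | ⟨h, hY⟩ | ⟨h, hY⟩ | ⟨h, hY⟩ | ⟨h, hY⟩ | ⟨h, hY⟩
    all_goals first
      | (rw [h.1] at hk; exact absurd hk (by simp))
      | skip
    -- Sh5 case
    rw [h.2 k] at hT
    cases hT with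
    | ident hT =>
      rw [show env .W = .pre (.coname (.ass false)) Proc.nil from rfl] at hT
      cases hT
      simp [hY]
  · -- parallel clause
    intro P Q hPQ
    rcases hπ with ⟨h, hY⟩ | ⟨h, hY⟩ | ⟨h, hY⟩ | ⟨h, hY⟩ | ⟨h, hY⟩ | ⟨h, hY⟩
    · rw [h.2.1 0] at hPQ; simp [Sys] at hPQ
    · refine ⟨loopPath _ _ t2, wPath, ∅, {Act.coname (.ass false)}, ∅, ∅,
        decomp1 h, ?_, ?_, sig_of_CS (Or.inl (sh_loop _ _ _)),
        sig_of_CS (Or.inr (Or.inr (Or.inr sh5_w))), ?_, ?_, ?_, ?_, ?_⟩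
      · exact Or.inr (Or.inr (Or.inl ⟨sh_loop _ _ _, rfl⟩))
      · exact Or.inr (Or.inr (Or.inr (Or.inr (Or.inr ⟨sh5_w, rfl⟩))))
      · rw [hY]
        rintro α (h0 | rfl)
        · exact h0.elim
        · exact Or.inr (Or.inl ⟨.ass false, trivial, Or.inr rfl⟩)
      · intro a ha; exact ha.elim
      · intro a ha; exact ha.elim
      · intro s _; exact s.elim
      · intro s _; exact s.elim
    · refine ⟨loopPath _ _ t_xT, loopPath _ _ t_R, ∅, ∅, ∅, ∅,
        decomp2 h, ?_, ?_, sig_of_CS (Or.inr (Or.inl (sh_loop _ _ _))),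
        sig_of_CS (Or.inr (Or.inr (Or.inl (sh_loop _ _ _)))), by simp [hY],
        ?_, ?_, ?_, ?_⟩
      · exact Or.inr (Or.inr (Or.inr (Or.inl ⟨sh_loop _ _ _, rfl⟩)))
      · exact Or.inr (Or.inr (Or.inr (Or.inr (Or.inl ⟨sh_loop _ _ _, rfl⟩))))
      · intro a ha; exact ha.elim
      · intro a ha; exact ha.elim
      · intro s _; exact s.elim
      · intro s _; exact s.elim
    · rw [h.2.1 0] at hPQ; simp at hPQ
    · rw [h.2.1 0] at hPQ; simp at hPQ
    · rw [h.2 0] at hPQ; simp at hPQ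
  · -- restriction clause
    intro P L' hP
    rcases hπ with ⟨h, hY⟩ | ⟨h, hY⟩ | ⟨h, hY⟩ | ⟨h, hY⟩ | ⟨h, hY⟩ | ⟨h, hY⟩
    · rw [h.2.1 0, Sys] at hP
      obtain ⟨-, rfl⟩ := Proc.res.inj hP
      refine ⟨loopPath _ _ t1, ?_, ?_⟩
      · exact ⟨h.1.symm, fun n _ => by rw [h.2.1 n]; rfl,
          fun n _ => (h.2.2 n).symm⟩
      · exact Or.inr (Or.inl ⟨sh_loop _ _ _, by rw [hY]⟩)
    all_goals first
      | (rw [h.2.1 0] at hP; simp at hP)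
      | (rw [h.2 0] at hP; simp at hP)
  · -- relabelling clause
    intro P f g hP
    rcases hπ with ⟨h, hY⟩ | ⟨h, hY⟩ | ⟨h, hY⟩ | ⟨h, hY⟩ | ⟨h, hY⟩ | ⟨h, hY⟩
    all_goals first
      | (rw [h.2.1 0] at hP; simp [Sys] at hP)
      | (rw [h.2 0] at hP; simp at hP)
  · -- suffix clause
    intro k
    rcases hπ with ⟨h, hY⟩ | ⟨h, hY⟩ | ⟨h, hY⟩ | ⟨h, hY⟩ | ⟨h, hY⟩ | ⟨h, hY⟩
    · exact Or.inl ⟨sh_drop h k, hY⟩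
    · exact Or.inr (Or.inl ⟨sh_drop h k, hY⟩)
    · exact Or.inr (Or.inr (Or.inl ⟨sh_drop h k, hY⟩))
    · exact Or.inr (Or.inr (Or.inr (Or.inl ⟨sh_drop h k, hY⟩)))
    · exact Or.inr (Or.inr (Or.inr (Or.inr (Or.inl ⟨sh_drop h k, hY⟩))))
    · exact Or.inr (Or.inr (Or.inr (Or.inr (Or.inr ⟨sh5_drop h k, hY⟩))))

/-- the infinite path consisting solely of the reader's τ-loop
(every state is the initial system, every action τ, so the writer never acts)
is ∅-just, hence just: justness does not guarantee that the write occurs. -/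
theorem reader_loop_is_just :
    ∃ π : Path env, π.len = ⊤ ∧ (∀ n, π.state n = Sys) ∧ (∀ n, π.act n = .tau) ∧
      Just env π ∅ ∧ IsJust env π := by
  refine ⟨loopPath Sys .tau t0, rfl, fun _ => rfl, fun _ => rfl, ?_, ?_⟩
  · exact ⟨CJ, CJ_closed, Or.inl ⟨sh_loop _ _ _, rfl⟩⟩
  · exact ⟨∅, by simp, CJ, CJ_closed, Or.inl ⟨sh_loop _ _ _, rfl⟩⟩

end CCSOneWriter
end CCSS
end

section
/- In the CCS rendering of Peterson's algorithm (with reads as handshakes), there exists an ∅-just (hence just) infinite path on which Process A performs noncritA but never performs critA: the path where A halts just before writing readyA, while B cycles through its instructions forever, always reading readyA = false. Hence the CCS rendering fails the liveness property under the justness assumption. -/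
namespace CCSS
namespace PetersonCCS

/-- Pure CCS: value notifications are handshake names; no signals. -/
inductive PN
  | assRA (b : Bool) | assRB (b : Bool) | assT (b : Bool)
  | notRA (b : Bool) | notRB (b : Bool) | notT (b : Bool)
  | noncritA | critA | noncritB | critB

inductive PI | A | B | RA (b : Bool) | RB (b : Bool) | T (b : Bool)

abbrev PP := Proc PN Empty PI

def KA : PP := .pre (.name .critA) (.pre (.coname (.assRA false)) (.ident .A))
def KB : PP := .pre (.name .critB) (.pre (.coname (.assRB false)) (.ident .B))

/-- The CCS rendering: reads are handshakes, e.g. readyA_false =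
ass(readyA,true).readyA_true + ass(readyA,false).readyA_false +
n̅ot(readyA,false).readyA_false. -/
def env : PI → PP
  | .A => .pre (.name .noncritA) (.pre (.coname (.assRA true)) (.pre (.coname (.assT false))
      (Proc.cplus (.pre (.name (.notRB false)) KA) (.pre (.name (.notT true)) KA))))
  | .B => .pre (.name .noncritB) (.pre (.coname (.assRB true)) (.pre (.coname (.assT true))
      (Proc.cplus (.pre (.name (.notRA false)) KB) (.pre (.name (.notT false)) KB))))
  | .RA b => Proc.cplus (.pre (.name (.assRA true)) (.ident (.RA true)))
              (Proc.cplus (.pre (.name (.assRA false)) (.ident (.RA false)))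
                          (.pre (.coname (.notRA b)) (.ident (.RA b))))
  | .RB b => Proc.cplus (.pre (.name (.assRB true)) (.ident (.RB true)))
              (Proc.cplus (.pre (.name (.assRB false)) (.ident (.RB false)))
                          (.pre (.coname (.notRB b)) (.ident (.RB b))))
  | .T b => Proc.cplus (.pre (.name (.assT true)) (.ident (.T true)))
              (Proc.cplus (.pre (.name (.assT false)) (.ident (.T false)))
                          (.pre (.coname (.notT b)) (.ident (.T b))))

/-- L: all names except noncritA, critA, noncritB, critB. -/
def L : Set (PN ⊕ Empty) :=
  {x | x ≠ .inl .noncritA ∧ x ≠ .inl .critA ∧ x ≠ .inl .noncritB ∧ x ≠ .inl .critB}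

def Sys : PP :=
  .res (.par (.par (.par (.par (.ident .A) (.ident .B)) (.ident (.RA false)))
    (.ident (.RB false))) (.ident (.T true))) L

section LivenessProof

/-- A's state after performing noncritA. -/
def A1 : PP := .pre (.coname (.assRA true)) (.pre (.coname (.assT false))
      (Proc.cplus (.pre (.name (.notRB false)) KA) (.pre (.name (.notT true)) KA)))

def As (m : ℕ) : PP := if m = 0 then .ident .A else A1

def bs : ℕ → PP
  | 0 => .ident .B
  | 1 => .pre (.coname (.assRB true)) (.pre (.coname (.assT true))
          (Proc.cplus (.pre (.name (.notRA false)) KB) (.pre (.name (.notT false)) KB)))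
  | 2 => .pre (.coname (.assT true))
          (Proc.cplus (.pre (.name (.notRA false)) KB) (.pre (.name (.notT false)) KB))
  | 3 => Proc.cplus (.pre (.name (.notRA false)) KB) (.pre (.name (.notT false)) KB)
  | 4 => KB
  | 5 => .pre (.coname (.assRB false)) (.ident .B)
  | _+6 => .ident .B

def ba : ℕ → Act PN Empty
  | 0 => .name .noncritB
  | 1 => .coname (.assRB true)
  | 2 => .coname (.assT true)
  | 3 => .name (.notRA false)
  | 4 => .name .critB
  | 5 => .coname (.assRB false)
  | _+6 => .tau

def bstate (j : ℕ) : PP := bs (j % 6)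
def bact (j : ℕ) : Act PN Empty := ba (j % 6)

def rbs (j : ℕ) : PP := if j % 2 = 0 then .ident (.RB false) else .ident (.RB true)
def rba (j : ℕ) : Act PN Empty :=
  if j % 2 = 0 then .name (.assRB true) else .name (.assRB false)

def GA (m : ℕ) : ℕ := m - (m - 1)
def GB (m : ℕ) : ℕ := m - 1
def GRA (m : ℕ) : ℕ := (m+1)/6
def GRB (m : ℕ) : ℕ := (m+3)/6 + (m-1)/6
def GT (m : ℕ) : ℕ := (m+2)/6

def SL2 (m : ℕ) : PP := .par (As (GA m)) (bstate (GB m))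
def SL3 (m : ℕ) : PP := .par (SL2 m) (.ident (.RA false))
def SL4 (m : ℕ) : PP := .par (SL3 m) (rbs (GRB m))
def S1 (m : ℕ) : PP := .par (SL4 m) (.ident (.T true))
def Stop (m : ℕ) : PP := .res (S1 m) L

def actL2 (m : ℕ) : Act PN Empty := if m = 0 then .name .noncritA else bact (m - 1)
def actL3 (m : ℕ) : Act PN Empty := if m % 6 = 4 then .tau else actL2 m
def actL4 (m : ℕ) : Act PN Empty :=
  if m % 6 = 2 ∨ (m % 6 = 0 ∧ m ≠ 0) then .tau else actL3 m
def topact (m : ℕ) : Act PN Empty := if m % 6 = 3 then .tau else actL4 m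

lemma stepA : Trans env (.ident .A) (.name .noncritA) A1 := .ident .pre

lemma stepB (j : ℕ) : Trans env (bstate j) (bact j) (bstate (j+1)) := by
  have h6 : j % 6 < 6 := Nat.mod_lt _ (by norm_num)
  have h1 : (j+1) % 6 = (j % 6 + 1) % 6 := by omega
  unfold bstate bact
  rw [h1]
  set r := j % 6 with hr
  clear_value r
  interval_cases r
  · exact .ident .pre
  · exact .pre
  · exact .pre
  · exact .choice (j := true) .pre
  · exact .pre
  · exact .pre

lemma stepRA : Trans env (.ident (.RA false)) (.coname (.notRA false)) (.ident (.RA false)) :=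
  .ident (.choice (j := false) (.choice (j := false) .pre))

lemma stepT : Trans env (.ident (.T true)) (.name (.assT true)) (.ident (.T true)) :=
  .ident (.choice (j := true) .pre)

lemma stepRB (j : ℕ) : Trans env (rbs j) (rba j) (rbs (j+1)) := by
  unfold rbs rba
  by_cases h : j % 2 = 0
  · rw [if_pos h, if_pos h, if_neg (by omega)]
    exact .ident (.choice (j := true) .pre)
  · rw [if_neg h, if_neg h, if_pos (by omega)]
    exact .ident (.choice (j := false) (.choice (j := true) .pre))

lemma stepL2 (m : ℕ) : Trans env (SL2 m) (actL2 m) (SL2 (m+1)) := by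
  unfold SL2 actL2
  rcases m with _ | m'
  · rw [if_pos rfl, show GA 0 = 0 by simp [GA], show GA 1 = 1 by simp [GA],
      show GB 0 = 0 by simp [GB], show GB 1 = 0 by simp [GB]]
    exact .parL stepA
  · rw [if_neg (Nat.succ_ne_zero m'), show GA (m'+1) = 1 by simp [GA],
      show GA (m'+2) = 1 by simp [GA], show GB (m'+1) = m' by simp [GB],
      show GB (m'+2) = m'+1 by simp [GB], show m'+1-1 = m' by omega]
    exact .parR (stepB m')

lemma stepL3 (m : ℕ) : Trans env (SL3 m) (actL3 m) (SL3 (m+1)) := by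
  unfold SL3 actL3
  by_cases h : m % 6 = 4
  · rw [if_pos h]
    have h2 := stepL2 m
    have ha : actL2 m = .name (.notRA false) := by
      unfold actL2 bact
      rw [if_neg (by omega), show (m-1)%6 = 3 by omega]
      rfl
    rw [ha] at h2
    exact .sync1 h2 stepRA
  · rw [if_neg h]
    exact .parL (stepL2 m)

lemma stepL4 (m : ℕ) : Trans env (SL4 m) (actL4 m) (SL4 (m+1)) := by
  unfold SL4 actL4
  by_cases h : m % 6 = 2 ∨ (m % 6 = 0 ∧ m ≠ 0)
  · rw [if_pos h]
    have hGRB : GRB (m+1) = GRB m + 1 := by unfold GRB; omega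
    rw [hGRB]
    have hrb := stepRB (GRB m)
    have h2 := stepL3 m
    rcases h with h | h
    · have ha : actL3 m = .coname (.assRB true) := by
        unfold actL3 actL2 bact
        rw [if_neg (by omega), if_neg (by omega), show (m-1)%6 = 1 by omega]
        rfl
      have hb : rba (GRB m) = .name (.assRB true) := by
        unfold rba; rw [if_pos (by unfold GRB; omega)]
      rw [ha] at h2; rw [hb] at hrb
      exact .sync2 h2 hrb
    · have ha : actL3 m = .coname (.assRB false) := by
        unfold actL3 actL2 bact
        rw [if_neg (by omega), if_neg (by omega), show (m-1)%6 = 5 by omega]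
        rfl
      have hb : rba (GRB m) = .name (.assRB false) := by
        unfold rba; rw [if_neg (by unfold GRB; omega)]
      rw [ha] at h2; rw [hb] at hrb
      exact .sync2 h2 hrb
  · rw [if_neg h, show GRB (m+1) = GRB m by unfold GRB; omega]
    exact .parL (stepL3 m)

lemma stepL1 (m : ℕ) : Trans env (S1 m) (topact m) (S1 (m+1)) := by
  unfold S1 topact
  by_cases h : m % 6 = 3
  · rw [if_pos h]
    have h2 := stepL4 m
    have ha : actL4 m = .coname (.assT true) := by
      unfold actL4 actL3 actL2 bact
      rw [if_neg (by omega), if_neg (by omega), if_neg (by omega),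
        show (m-1)%6 = 2 by omega]
      rfl
    rw [ha] at h2
    exact .sync2 h2 stepT
  · rw [if_neg h]
    exact .parL (stepL4 m)

lemma allowed_topact (m : ℕ) : Act.allowed L (topact m) := by
  unfold topact actL4 actL3 actL2
  split_ifs with h1 h2 h3 h4
  · trivial
  · trivial
  · trivial
  · simp [Act.allowed, L]
  · have h5 : (m-1) % 6 = 0 ∨ (m-1) % 6 = 4 := by omega
    unfold bact
    rcases h5 with h | h <;> rw [h] <;> simp [ba, Act.allowed, L]

lemma stepTop (m : ℕ) : Trans env (Stop m) (topact m) (Stop (m+1)) :=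
  .res (stepL1 m) (allowed_topact m)

end LivenessProof

section LivenessProof2

/-- The top-level infinite path. -/
def piTop : Path env where
  len := ⊤
  state := Stop
  act := topact
  valid n _ := stepTop n

def pi1 (k : ℕ) : Path env where
  len := ⊤
  state n := S1 (n+k)
  act n := topact (n+k)
  valid n _ := by have := stepL1 (n+k); rwa [show n+k+1 = n+1+k by omega] at this

def piL4 (k : ℕ) : Path env where
  len := ⊤
  state n := SL4 (n+k)
  act n := actL4 (n+k)
  valid n _ := by have := stepL4 (n+k); rwa [show n+k+1 = n+1+k by omega] at this

def piL3 (k : ℕ) : Path env where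
  len := ⊤
  state n := SL3 (n+k)
  act n := actL3 (n+k)
  valid n _ := by have := stepL3 (n+k); rwa [show n+k+1 = n+1+k by omega] at this

def piL2 (k : ℕ) : Path env where
  len := ⊤
  state n := SL2 (n+k)
  act n := actL2 (n+k)
  valid n _ := by have := stepL2 (n+k); rwa [show n+k+1 = n+1+k by omega] at this

def piA (k : ℕ) : Path env where
  len := 1 - (k : ℕ∞)
  state n := As (n+k)
  act _ := .name .noncritA
  valid n h := by
    rcases k with _ | k
    · rcases n with _ | n
      · exact stepA
      · exfalso
        have : ((n+1 : ℕ) : ℕ∞) < ((1:ℕ) : ℕ∞) := by simpa using h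
        have := Nat.cast_lt.mp this
        omega
    · exfalso
      have h0 : (1 : ℕ∞) - ((k+1 : ℕ) : ℕ∞) = 0 := by
        apply tsub_eq_zero_of_le
        exact_mod_cast Nat.le_add_left 1 k
      rw [h0] at h
      simp at h

def piB (k : ℕ) : Path env where
  len := ⊤
  state n := bstate (n+k)
  act n := bact (n+k)
  valid n _ := by have := stepB (n+k); rwa [show n+k+1 = n+1+k by omega] at this

def piRA : Path env where
  len := ⊤
  state _ := .ident (.RA false)
  act _ := .coname (.notRA false)
  valid _ _ := stepRA

def piRB (k : ℕ) : Path env where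
  len := ⊤
  state n := rbs (n+k)
  act n := rba (n+k)
  valid n _ := by have := stepRB (n+k); rwa [show n+k+1 = n+1+k by omega] at this

def piT : Path env where
  len := ⊤
  state _ := .ident (.T true)
  act _ := .name (.assT true)
  valid _ _ := stepT

/-- Spec predicates. -/
def MTop (π : Path env) (k : ℕ) : Prop :=
  π.len = ⊤ ∧ (∀ n, π.state n = Stop (n+k)) ∧ ∀ n, π.act n = topact (n+k)
def M1 (π : Path env) (k : ℕ) : Prop :=
  π.len = ⊤ ∧ (∀ n, π.state n = S1 (n+k)) ∧ ∀ n, π.act n = topact (n+k)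
def ML4 (π : Path env) (k : ℕ) : Prop :=
  π.len = ⊤ ∧ (∀ n, π.state n = SL4 (n+k)) ∧ ∀ n, π.act n = actL4 (n+k)
def ML3 (π : Path env) (k : ℕ) : Prop :=
  π.len = ⊤ ∧ (∀ n, π.state n = SL3 (n+k)) ∧ ∀ n, π.act n = actL3 (n+k)
def ML2 (π : Path env) (k : ℕ) : Prop :=
  π.len = ⊤ ∧ (∀ n, π.state n = SL2 (n+k)) ∧ ∀ n, π.act n = actL2 (n+k)
def MA (π : Path env) (k : ℕ) : Prop :=
  π.len = 1 - (k : ℕ∞) ∧ (∀ n, π.state n = As (n+k)) ∧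
    (k = 0 → π.act 0 = .name .noncritA)
def MB (π : Path env) (k : ℕ) : Prop :=
  π.len = ⊤ ∧ (∀ n, π.state n = bstate (n+k)) ∧ ∀ n, π.act n = bact (n+k)
def MRA (π : Path env) : Prop :=
  π.len = ⊤ ∧ (∀ n, π.state n = .ident (.RA false)) ∧ ∀ n, π.act n = .coname (.notRA false)
def MRB (π : Path env) (k : ℕ) : Prop :=
  π.len = ⊤ ∧ (∀ n, π.state n = rbs (n+k)) ∧ ∀ n, π.act n = rba (n+k)
def MT (π : Path env) : Prop :=
  π.len = ⊤ ∧ (∀ n, π.state n = .ident (.T true)) ∧ ∀ n, π.act n = .name (.assT true)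

lemma MTop_piTop : MTop piTop 0 := ⟨rfl, fun _ => rfl, fun _ => rfl⟩
lemma M1_pi1 (k : ℕ) : M1 (pi1 k) k := ⟨rfl, fun _ => rfl, fun _ => rfl⟩
lemma ML4_piL4 (k : ℕ) : ML4 (piL4 k) k := ⟨rfl, fun _ => rfl, fun _ => rfl⟩
lemma ML3_piL3 (k : ℕ) : ML3 (piL3 k) k := ⟨rfl, fun _ => rfl, fun _ => rfl⟩
lemma ML2_piL2 (k : ℕ) : ML2 (piL2 k) k := ⟨rfl, fun _ => rfl, fun _ => rfl⟩
lemma MA_piA (k : ℕ) : MA (piA k) k := ⟨rfl, fun _ => rfl, fun _ => rfl⟩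
lemma MB_piB (k : ℕ) : MB (piB k) k := ⟨rfl, fun _ => rfl, fun _ => rfl⟩
lemma MRA_piRA : MRA piRA := ⟨rfl, fun _ => rfl, fun _ => rfl⟩
lemma MRB_piRB (k : ℕ) : MRB (piRB k) k := ⟨rfl, fun _ => rfl, fun _ => rfl⟩
lemma MT_piT : MT piT := ⟨rfl, fun _ => rfl, fun _ => rfl⟩

lemma isup_top {f : ℕ → ℕ} (hf : ∀ m : ℕ, ∃ n : ℕ, m ≤ f n) :
    (⨆ n : {n : ℕ // (n : ℕ∞) ≤ (⊤ : ℕ∞)}, ((f n.1 : ℕ) : ℕ∞)) = ⊤ := by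
  set S := (⨆ n : {n : ℕ // (n : ℕ∞) ≤ (⊤ : ℕ∞)}, ((f n.1 : ℕ) : ℕ∞)) with hS
  have key : ∀ m : ℕ, (m : ℕ∞) ≤ S := by
    intro m
    obtain ⟨n, hn⟩ := hf m
    exact le_trans (by exact_mod_cast hn)
      (le_iSup (fun n : {n : ℕ // (n : ℕ∞) ≤ (⊤ : ℕ∞)} => ((f n.1 : ℕ) : ℕ∞)) ⟨n, le_top⟩)
  rcases eq_or_ne S ⊤ with h | h
  · exact h
  · exfalso
    lift S to ℕ using h with c
    have := key (c+1)
    have := Nat.cast_le (α := ℕ∞) |>.mp this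
    omega

lemma isup_coe {f : ℕ → ℕ} (c : ℕ) (hb : ∀ n, f n ≤ c) (ha : ∃ n, f n = c) :
    (⨆ n : {n : ℕ // (n : ℕ∞) ≤ (⊤ : ℕ∞)}, ((f n.1 : ℕ) : ℕ∞)) = (c : ℕ∞) := by
  apply le_antisymm
  · exact iSup_le fun n => by exact_mod_cast hb n.1
  · obtain ⟨n, hn⟩ := ha
    calc (c : ℕ∞) = ((f n : ℕ) : ℕ∞) := by rw [hn]
      _ ≤ _ := le_iSup (fun n : {n : ℕ // (n : ℕ∞) ≤ (⊤ : ℕ∞)} => ((f n.1 : ℕ) : ℕ∞)) ⟨n, le_top⟩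

end LivenessProof2

section LivenessProof3

lemma decomp1 {π : Path env} {k : ℕ} (h : M1 π k) :
    ∃ πP πQ, IsParDecomp env π πP πQ ∧ ML4 πP k ∧ MT πQ := by
  obtain ⟨hlen, hst, hact⟩ := h
  refine ⟨piL4 k, piT, ⟨fun n => n, fun n => GT (n+k) - GT k, rfl, by simp only [GA,GB,GRA,GRB,GT]; try omega,
    ?_, ?_, ?_, ?_⟩, ML4_piL4 k, MT_piT⟩
  · intro n _
    rw [hst n]; rfl
  · intro n _
    by_cases h3 : (n+k) % 6 = 3
    · right; right; left
      refine ⟨rfl, by simp only [GA,GB,GRA,GRB,GT]; try omega, ?_, .assT true, Or.inr ⟨?_, rfl⟩⟩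
      · rw [hact n]; unfold topact; rw [if_pos h3]
      · show actL4 (n+k) = _
        unfold actL4 actL3 actL2 bact
        rw [if_neg (by omega), if_neg (by omega), if_neg (by omega),
          show (n+k-1)%6 = 2 by omega]
        rfl
    · left
      refine ⟨rfl, by simp only [GA,GB,GRA,GRB,GT]; try omega, ?_⟩
      rw [hact n]
      show actL4 (n+k) = topact (n+k)
      unfold topact; rw [if_neg h3]
  · rw [hlen]
    exact (isup_top (f := fun n => n) (fun m => ⟨m, le_refl m⟩)).symm
  · rw [hlen]
    exact (isup_top (f := fun n => GT (n+k) - GT k) (fun m => ⟨6*(m + GT k) + 6, by simp only [GA,GB,GRA,GRB,GT]; try omega⟩)).symm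

lemma decompL4 {π : Path env} {k : ℕ} (h : ML4 π k) :
    ∃ πP πQ, IsParDecomp env π πP πQ ∧ ML3 πP k ∧ MRB πQ (GRB k) := by
  obtain ⟨hlen, hst, hact⟩ := h
  refine ⟨piL3 k, piRB (GRB k), ⟨fun n => n, fun n => GRB (n+k) - GRB k, rfl, by simp only [GA,GB,GRA,GRB,GT]; try omega,
    ?_, ?_, ?_, ?_⟩, ML3_piL3 k, MRB_piRB (GRB k)⟩
  · intro n _
    rw [hst n]
    show SL4 (n+k) = .par (SL3 (n+k)) (rbs (GRB (n+k) - GRB k + GRB k))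
    rw [show GRB (n+k) - GRB k + GRB k = GRB (n+k) by simp only [GA,GB,GRA,GRB,GT]; try omega]
    rfl
  · intro n _
    by_cases h2 : (n+k) % 6 = 2
    · right; right; left
      refine ⟨rfl, by simp only [GA,GB,GRA,GRB,GT]; try omega, ?_, .assRB true, Or.inr ⟨?_, ?_⟩⟩
      · rw [hact n]; unfold actL4; rw [if_pos (Or.inl h2)]
      · show actL3 (n+k) = _
        unfold actL3 actL2 bact
        rw [if_neg (by omega), if_neg (by omega), show (n+k-1)%6 = 1 by omega]
        rfl
      · show rba (GRB (n+k) - GRB k + GRB k) = _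
        rw [show GRB (n+k) - GRB k + GRB k = GRB (n+k) by simp only [GA,GB,GRA,GRB,GT]; try omega]
        unfold rba
        rw [if_pos (by simp only [GA,GB,GRA,GRB,GT]; try omega)]
    · by_cases h0 : (n+k) % 6 = 0 ∧ (n+k) ≠ 0
      · right; right; left
        refine ⟨rfl, by simp only [GA,GB,GRA,GRB,GT]; try omega, ?_, .assRB false, Or.inr ⟨?_, ?_⟩⟩
        · rw [hact n]; unfold actL4; rw [if_pos (Or.inr h0)]
        · show actL3 (n+k) = _
          unfold actL3 actL2 bact
          rw [if_neg (by omega), if_neg (by omega), show (n+k-1)%6 = 5 by omega]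
          rfl
        · show rba (GRB (n+k) - GRB k + GRB k) = _
          rw [show GRB (n+k) - GRB k + GRB k = GRB (n+k) by simp only [GA,GB,GRA,GRB,GT]; try omega]
          unfold rba
          rw [if_neg (by simp only [GA,GB,GRA,GRB,GT]; try omega)]
      · left
        refine ⟨rfl, by simp only [GA,GB,GRA,GRB,GT]; try omega, ?_⟩
        rw [hact n]
        show actL3 (n+k) = actL4 (n+k)
        unfold actL4; rw [if_neg (by tauto)]
  · rw [hlen]
    exact (isup_top (f := fun n => n) (fun m => ⟨m, le_refl m⟩)).symm
  · rw [hlen]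
    exact (isup_top (f := fun n => GRB (n+k) - GRB k) (fun m => ⟨6*(m + GRB k) + 12, by simp only [GA,GB,GRA,GRB,GT]; try omega⟩)).symm

lemma decompL3 {π : Path env} {k : ℕ} (h : ML3 π k) :
    ∃ πP πQ, IsParDecomp env π πP πQ ∧ ML2 πP k ∧ MRA πQ := by
  obtain ⟨hlen, hst, hact⟩ := h
  refine ⟨piL2 k, piRA, ⟨fun n => n, fun n => GRA (n+k) - GRA k, rfl, by simp only [GA,GB,GRA,GRB,GT]; try omega,
    ?_, ?_, ?_, ?_⟩, ML2_piL2 k, MRA_piRA⟩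
  · intro n _
    rw [hst n]; rfl
  · intro n _
    by_cases h4 : (n+k) % 6 = 4
    · right; right; left
      refine ⟨rfl, by simp only [GA,GB,GRA,GRB,GT]; try omega, ?_, .notRA false, Or.inl ⟨?_, rfl⟩⟩
      · rw [hact n]; unfold actL3; rw [if_pos h4]
      · show actL2 (n+k) = _
        unfold actL2 bact
        rw [if_neg (by omega), show (n+k-1)%6 = 3 by omega]
        rfl
    · left
      refine ⟨rfl, by simp only [GA,GB,GRA,GRB,GT]; try omega, ?_⟩
      rw [hact n]
      show actL2 (n+k) = actL3 (n+k)
      unfold actL3; rw [if_neg h4]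
  · rw [hlen]
    exact (isup_top (f := fun n => n) (fun m => ⟨m, le_refl m⟩)).symm
  · rw [hlen]
    exact (isup_top (f := fun n => GRA (n+k) - GRA k) (fun m => ⟨6*(m + GRA k) + 6, by simp only [GA,GB,GRA,GRB,GT]; try omega⟩)).symm

lemma decompL2 {π : Path env} {k : ℕ} (h : ML2 π k) :
    ∃ πP πQ, IsParDecomp env π πP πQ ∧ MA πP (GA k) ∧ MB πQ (GB k) := by
  obtain ⟨hlen, hst, hact⟩ := h
  refine ⟨piA (GA k), piB (GB k), ⟨fun n => GA (n+k) - GA k, fun n => GB (n+k) - GB k,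
    by simp only [GA,GB,GRA,GRB,GT]; try omega, by simp only [GA,GB,GRA,GRB,GT]; try omega, ?_, ?_, ?_, ?_⟩, MA_piA (GA k), MB_piB (GB k)⟩
  · intro n _
    rw [hst n]
    show SL2 (n+k) = .par (As (GA (n+k) - GA k + GA k)) (bstate (GB (n+k) - GB k + GB k))
    rw [show GA (n+k) - GA k + GA k = GA (n+k) by simp only [GA,GB,GRA,GRB,GT]; try omega,
      show GB (n+k) - GB k + GB k = GB (n+k) by simp only [GA,GB,GRA,GRB,GT]; try omega]
    rfl
  · intro n _
    by_cases h0 : n + k = 0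
    · left
      refine ⟨by simp only [GA,GB,GRA,GRB,GT]; try omega, by simp only [GA,GB,GRA,GRB,GT]; try omega, ?_⟩
      rw [hact n]
      show Act.name .noncritA = actL2 (n+k)
      unfold actL2
      rw [if_pos h0]
    · right; left
      refine ⟨by simp only [GA,GB,GRA,GRB,GT]; try omega, by simp only [GA,GB,GRA,GRB,GT]; try omega, ?_⟩
      rw [hact n]
      show bact (GB (n+k) - GB k + GB k) = actL2 (n+k)
      rw [show GB (n+k) - GB k + GB k = GB (n+k) by simp only [GA,GB,GRA,GRB,GT]; try omega]
      unfold actL2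
      rw [if_neg h0]
      rfl
  · rw [hlen]
    rcases Nat.eq_zero_or_pos k with hk | hk
    · subst hk
      rw [show GA 0 = 0 from rfl]
      show (1 : ℕ∞) - ((0:ℕ) : ℕ∞) = _
      rw [show (1 : ℕ∞) - ((0:ℕ) : ℕ∞) = ((1:ℕ) : ℕ∞) by simp]
      exact (isup_coe (f := fun n => GA (n+0) - 0) 1
        (fun n => by simp only [GA,GB,GRA,GRB,GT]; try omega)
        ⟨1, by simp only [GA,GB,GRA,GRB,GT]; try omega⟩).symm
    · rw [show GA k = 1 by simp only [GA,GB,GRA,GRB,GT]; try omega]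
      show (1 : ℕ∞) - ((1:ℕ) : ℕ∞) = _
      rw [show (1 : ℕ∞) - ((1:ℕ) : ℕ∞) = ((0:ℕ) : ℕ∞) by simp]
      exact (isup_coe (f := fun n => GA (n+k) - 1) 0
        (fun n => by simp only [GA,GB,GRA,GRB,GT]; try omega)
        ⟨0, by simp only [GA,GB,GRA,GRB,GT]; try omega⟩).symm
  · rw [hlen]
    exact (isup_top (f := fun n => GB (n+k) - GB k) (fun m => ⟨m + k + 1, by simp only [GA,GB,GRA,GRB,GT]; try omega⟩)).symm

end LivenessProof3

section LivenessProof4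

lemma MTop_drop {π : Path env} {k : ℕ} (h : MTop π k) (j : ℕ) : MTop (π.drop j) (k+j) := by
  obtain ⟨h1, h2, h3⟩ := h
  refine ⟨?_, fun n => ?_, fun n => ?_⟩
  · show π.len - (j : ℕ∞) = ⊤
    rw [h1]; simp
  · show π.state (n+j) = _
    rw [h2 (n+j), show n+j+k = n+(k+j) by omega]
  · show π.act (n+j) = _
    rw [h3 (n+j), show n+j+k = n+(k+j) by omega]

lemma M1_drop {π : Path env} {k : ℕ} (h : M1 π k) (j : ℕ) : M1 (π.drop j) (k+j) := by
  obtain ⟨h1, h2, h3⟩ := h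
  refine ⟨?_, fun n => ?_, fun n => ?_⟩
  · show π.len - (j : ℕ∞) = ⊤
    rw [h1]; simp
  · show π.state (n+j) = _
    rw [h2 (n+j), show n+j+k = n+(k+j) by omega]
  · show π.act (n+j) = _
    rw [h3 (n+j), show n+j+k = n+(k+j) by omega]

lemma ML4_drop {π : Path env} {k : ℕ} (h : ML4 π k) (j : ℕ) : ML4 (π.drop j) (k+j) := by
  obtain ⟨h1, h2, h3⟩ := h
  refine ⟨?_, fun n => ?_, fun n => ?_⟩
  · show π.len - (j : ℕ∞) = ⊤
    rw [h1]; simp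
  · show π.state (n+j) = _
    rw [h2 (n+j), show n+j+k = n+(k+j) by omega]
  · show π.act (n+j) = _
    rw [h3 (n+j), show n+j+k = n+(k+j) by omega]

lemma ML3_drop {π : Path env} {k : ℕ} (h : ML3 π k) (j : ℕ) : ML3 (π.drop j) (k+j) := by
  obtain ⟨h1, h2, h3⟩ := h
  refine ⟨?_, fun n => ?_, fun n => ?_⟩
  · show π.len - (j : ℕ∞) = ⊤
    rw [h1]; simp
  · show π.state (n+j) = _
    rw [h2 (n+j), show n+j+k = n+(k+j) by omega]
  · show π.act (n+j) = _
    rw [h3 (n+j), show n+j+k = n+(k+j) by omega]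

lemma ML2_drop {π : Path env} {k : ℕ} (h : ML2 π k) (j : ℕ) : ML2 (π.drop j) (k+j) := by
  obtain ⟨h1, h2, h3⟩ := h
  refine ⟨?_, fun n => ?_, fun n => ?_⟩
  · show π.len - (j : ℕ∞) = ⊤
    rw [h1]; simp
  · show π.state (n+j) = _
    rw [h2 (n+j), show n+j+k = n+(k+j) by omega]
  · show π.act (n+j) = _
    rw [h3 (n+j), show n+j+k = n+(k+j) by omega]

lemma MA_drop {π : Path env} {k : ℕ} (h : MA π k) (j : ℕ) : MA (π.drop j) (k+j) := by
  obtain ⟨h1, h2, h3⟩ := h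
  refine ⟨?_, fun n => ?_, fun hkj => ?_⟩
  · show π.len - (j : ℕ∞) = 1 - ((k+j : ℕ) : ℕ∞)
    rw [h1, tsub_tsub]
    norm_cast
  · show π.state (n+j) = _
    rw [h2 (n+j), show n+j+k = n+(k+j) by omega]
  · have hk : k = 0 := by omega
    have hj : j = 0 := by omega
    subst hk; subst hj
    show π.act (0+0) = _
    exact h3 rfl

lemma MB_drop {π : Path env} {k : ℕ} (h : MB π k) (j : ℕ) : MB (π.drop j) (k+j) := by
  obtain ⟨h1, h2, h3⟩ := h
  refine ⟨?_, fun n => ?_, fun n => ?_⟩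
  · show π.len - (j : ℕ∞) = ⊤
    rw [h1]; simp
  · show π.state (n+j) = _
    rw [h2 (n+j), show n+j+k = n+(k+j) by omega]
  · show π.act (n+j) = _
    rw [h3 (n+j), show n+j+k = n+(k+j) by omega]

lemma MRA_drop {π : Path env} (h : MRA π) (j : ℕ) : MRA (π.drop j) := by
  obtain ⟨h1, h2, h3⟩ := h
  refine ⟨?_, fun n => h2 (n+j), fun n => h3 (n+j)⟩
  show π.len - (j : ℕ∞) = ⊤
  rw [h1]; simp

lemma MRB_drop {π : Path env} {k : ℕ} (h : MRB π k) (j : ℕ) : MRB (π.drop j) (k+j) := by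
  obtain ⟨h1, h2, h3⟩ := h
  refine ⟨?_, fun n => ?_, fun n => ?_⟩
  · show π.len - (j : ℕ∞) = ⊤
    rw [h1]; simp
  · show π.state (n+j) = _
    rw [h2 (n+j), show n+j+k = n+(k+j) by omega]
  · show π.act (n+j) = _
    rw [h3 (n+j), show n+j+k = n+(k+j) by omega]

lemma MT_drop {π : Path env} (h : MT π) (j : ℕ) : MT (π.drop j) := by
  obtain ⟨h1, h2, h3⟩ := h
  refine ⟨?_, fun n => h2 (n+j), fun n => h3 (n+j)⟩
  show π.len - (j : ℕ∞) = ⊤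
  rw [h1]; simp

/-- Sequential shape: not a parallel composition, restriction, or relabelling. -/
def Seq (P : PP) : Prop :=
  (∀ Q R, P ≠ .par Q R) ∧ (∀ Q L', P ≠ .res Q L') ∧ (∀ Q f g, P ≠ .rel Q f g)

lemma seq_ident (i : PI) : Seq (.ident i) :=
  ⟨fun _ _ h => (nomatch h), fun _ _ h => (nomatch h),
   fun _ _ _ h => (nomatch h)⟩

lemma seq_As (m : ℕ) : Seq (As m) := by
  unfold As
  split
  · exact seq_ident _
  · exact ⟨fun _ _ h => (nomatch h), fun _ _ h => (nomatch h),
      fun _ _ _ h => (nomatch h)⟩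

lemma seq_bstate (j : ℕ) : Seq (bstate j) := by
  unfold bstate
  rcases hr : j % 6 with _|_|_|_|_|_|r <;>
    exact ⟨fun _ _ h => (nomatch h), fun _ _ h => (nomatch h),
      fun _ _ _ h => (nomatch h)⟩

lemma seq_rbs (j : ℕ) : Seq (rbs j) := by
  unfold rbs
  split <;> exact seq_ident _

/-- The family of all relevant paths, used for the signalling requirement. -/
def D (π : Path env) : Prop :=
  (∃ k, MTop π k) ∨ (∃ k, M1 π k) ∨ (∃ k, ML4 π k) ∨ (∃ k, ML3 π k) ∨ (∃ k, ML2 π k) ∨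
  (∃ k, MA π k) ∨ (∃ k, MB π k) ∨ MRA π ∨ (∃ k, MRB π k) ∨ MT π

lemma D_drop {π : Path env} (h : D π) (j : ℕ) : D (π.drop j) := by
  rcases h with ⟨k,h⟩|⟨k,h⟩|⟨k,h⟩|⟨k,h⟩|⟨k,h⟩|⟨k,h⟩|⟨k,h⟩|h|⟨k,h⟩|h
  · exact Or.inl ⟨k+j, MTop_drop h j⟩
  · exact Or.inr (Or.inl ⟨k+j, M1_drop h j⟩)
  · exact Or.inr (Or.inr (Or.inl ⟨k+j, ML4_drop h j⟩))
  · exact Or.inr (Or.inr (Or.inr (Or.inl ⟨k+j, ML3_drop h j⟩)))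
  · exact Or.inr (Or.inr (Or.inr (Or.inr (Or.inl ⟨k+j, ML2_drop h j⟩))))
  · exact Or.inr (Or.inr (Or.inr (Or.inr (Or.inr (Or.inl ⟨k+j, MA_drop h j⟩)))))
  · exact Or.inr (Or.inr (Or.inr (Or.inr (Or.inr (Or.inr (Or.inl ⟨k+j, MB_drop h j⟩))))))
  · exact Or.inr (Or.inr (Or.inr (Or.inr (Or.inr (Or.inr (Or.inr (Or.inl (MRA_drop h j))))))))
  · exact Or.inr (Or.inr (Or.inr (Or.inr (Or.inr (Or.inr (Or.inr (Or.inr (Or.inl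
      ⟨k+j, MRB_drop h j⟩))))))))
  · exact Or.inr (Or.inr (Or.inr (Or.inr (Or.inr (Or.inr (Or.inr (Or.inr (Or.inr
      (MT_drop h j)))))))))

lemma SC_closed : SignallingClosed env (fun π (_ : Set Empty) => D π) := by
  intro π Y hD
  refine ⟨fun k _ s _ => s.elim, ?_, ?_, ?_, fun j => D_drop hD j⟩
  · -- par clause
    intro P Q hpq
    rcases hD with ⟨k,h⟩|⟨k,h⟩|⟨k,h⟩|⟨k,h⟩|⟨k,h⟩|⟨k,h⟩|⟨k,h⟩|h|⟨k,h⟩|h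
    · rw [h.2.1 0] at hpq; exact absurd hpq (fun hpq => (nomatch hpq))
    · obtain ⟨πP, πQ, hd, hP, hQ⟩ := decomp1 h
      exact ⟨πP, πQ, ∅, ∅, hd,
        Or.inr (Or.inr (Or.inl ⟨k, hP⟩)),
        Or.inr (Or.inr (Or.inr (Or.inr (Or.inr (Or.inr (Or.inr (Or.inr (Or.inr hQ)))))))),
        by simp⟩
    · obtain ⟨πP, πQ, hd, hP, hQ⟩ := decompL4 h
      exact ⟨πP, πQ, ∅, ∅, hd,
        Or.inr (Or.inr (Or.inr (Or.inl ⟨k, hP⟩))),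
        Or.inr (Or.inr (Or.inr (Or.inr (Or.inr (Or.inr (Or.inr (Or.inr (Or.inl
          ⟨GRB k, hQ⟩)))))))),
        by simp⟩
    · obtain ⟨πP, πQ, hd, hP, hQ⟩ := decompL3 h
      exact ⟨πP, πQ, ∅, ∅, hd,
        Or.inr (Or.inr (Or.inr (Or.inr (Or.inl ⟨k, hP⟩)))),
        Or.inr (Or.inr (Or.inr (Or.inr (Or.inr (Or.inr (Or.inr (Or.inl hQ))))))),
        by simp⟩
    · obtain ⟨πP, πQ, hd, hP, hQ⟩ := decompL2 h
      exact ⟨πP, πQ, ∅, ∅, hd,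
        Or.inr (Or.inr (Or.inr (Or.inr (Or.inr (Or.inl ⟨GA k, hP⟩))))),
        Or.inr (Or.inr (Or.inr (Or.inr (Or.inr (Or.inr (Or.inl ⟨GB k, hQ⟩)))))),
        by simp⟩
    · rw [h.2.1 0] at hpq; exact absurd hpq ((seq_As _).1 P Q)
    · rw [h.2.1 0] at hpq; exact absurd hpq ((seq_bstate _).1 P Q)
    · rw [h.2.1 0] at hpq; exact absurd hpq ((seq_ident _).1 P Q)
    · rw [h.2.1 0] at hpq; exact absurd hpq ((seq_rbs _).1 P Q)
    · rw [h.2.1 0] at hpq; exact absurd hpq ((seq_ident _).1 P Q)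
  · -- res clause
    intro P L' hres
    rcases hD with ⟨k,h⟩|⟨k,h⟩|⟨k,h⟩|⟨k,h⟩|⟨k,h⟩|⟨k,h⟩|⟨k,h⟩|h|⟨k,h⟩|h
    · rw [h.2.1 0] at hres
      unfold Stop at hres
      injection hres with hP hL
      refine ⟨pi1 k, ⟨h.1.symm, fun n _ => ?_, fun n _ => (h.2.2 n).symm⟩,
        Or.inr (Or.inl ⟨k, M1_pi1 k⟩)⟩
      rw [h.2.1 n, ← hL]
      rfl
    · rw [h.2.1 0] at hres; exact absurd hres (fun hres => (nomatch hres))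
    · rw [h.2.1 0] at hres; exact absurd hres (fun hres => (nomatch hres))
    · rw [h.2.1 0] at hres; exact absurd hres (fun hres => (nomatch hres))
    · rw [h.2.1 0] at hres; exact absurd hres (fun hres => (nomatch hres))
    · rw [h.2.1 0] at hres; exact absurd hres ((seq_As _).2.1 P L')
    · rw [h.2.1 0] at hres; exact absurd hres ((seq_bstate _).2.1 P L')
    · rw [h.2.1 0] at hres; exact absurd hres ((seq_ident _).2.1 P L')
    · rw [h.2.1 0] at hres; exact absurd hres ((seq_rbs _).2.1 P L')
    · rw [h.2.1 0] at hres; exact absurd hres ((seq_ident _).2.1 P L')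
  · -- rel clause
    intro P f g hrel
    rcases hD with ⟨k,h⟩|⟨k,h⟩|⟨k,h⟩|⟨k,h⟩|⟨k,h⟩|⟨k,h⟩|⟨k,h⟩|h|⟨k,h⟩|h
    · rw [h.2.1 0] at hrel; exact absurd hrel (fun hrel => (nomatch hrel))
    · rw [h.2.1 0] at hrel; exact absurd hrel (fun hrel => (nomatch hrel))
    · rw [h.2.1 0] at hrel; exact absurd hrel (fun hrel => (nomatch hrel))
    · rw [h.2.1 0] at hrel; exact absurd hrel (fun hrel => (nomatch hrel))
    · rw [h.2.1 0] at hrel; exact absurd hrel (fun hrel => (nomatch hrel))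
    · rw [h.2.1 0] at hrel; exact absurd hrel ((seq_As _).2.2 P f g)
    · rw [h.2.1 0] at hrel; exact absurd hrel ((seq_bstate _).2.2 P f g)
    · rw [h.2.1 0] at hrel; exact absurd hrel ((seq_ident _).2.2 P f g)
    · rw [h.2.1 0] at hrel; exact absurd hrel ((seq_rbs _).2.2 P f g)
    · rw [h.2.1 0] at hrel; exact absurd hrel ((seq_ident _).2.2 P f g)

end LivenessProof4

section LivenessProof5

def YA : Set (Act PN Empty) := {.coname (.assRA true)}

lemma mem_actsOf_YA : Act.coname (PN.assRA true) ∈ (actsOf L : Set (Act PN Empty)) := by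
  refine Or.inl ⟨.assRA true, ?_, Or.inr rfl⟩
  simp [L]

/-- The justness witness family. -/
def CJ (π : Path env) (Y : Set (Act PN Empty)) : Prop :=
  ((∃ k, MTop π k) ∧ Y = ∅) ∨
  ((∃ k, M1 π k) ∧ Y = ∅ ∪ actsOf L) ∨
  ((∃ k, ML4 π k) ∧ Y = YA) ∨
  ((∃ k, ML3 π k) ∧ Y = YA) ∨
  ((∃ k, ML2 π k) ∧ Y = YA) ∨
  ((∃ k, MA π k) ∧ Y = YA) ∨
  ((∃ k, MB π k) ∧ Y = ∅) ∨
  (MRA π ∧ Y = ∅) ∨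
  ((∃ k, MRB π k) ∧ Y = ∅) ∨
  (MT π ∧ Y = ∅)

lemma sig_triv {X : Set (Act PN Empty)} : ∀ s ∈ (∅ : Set Empty), Act.sig s ∉ X :=
  fun s _ => s.elim

lemma CJ_closed : JustClosed env CJ := by
  intro π Y hC
  refine ⟨?_, ?_, ?_, ?_, ?_⟩
  · -- length clause
    intro k' hk' α P' htr
    rcases hC with ⟨⟨k,h⟩,hY⟩|⟨⟨k,h⟩,hY⟩|⟨⟨k,h⟩,hY⟩|⟨⟨k,h⟩,hY⟩|⟨⟨k,h⟩,hY⟩|⟨⟨k,h⟩,hY⟩|⟨⟨k,h⟩,hY⟩|⟨h,hY⟩|⟨⟨k,h⟩,hY⟩|⟨h,hY⟩ <;>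
      [skip; skip; skip; skip; skip; skip; skip; skip; skip; skip]
    · rw [h.1] at hk'; exact absurd hk'.symm (ENat.coe_ne_top k')
    · rw [h.1] at hk'; exact absurd hk'.symm (ENat.coe_ne_top k')
    · rw [h.1] at hk'; exact absurd hk'.symm (ENat.coe_ne_top k')
    · rw [h.1] at hk'; exact absurd hk'.symm (ENat.coe_ne_top k')
    · rw [h.1] at hk'; exact absurd hk'.symm (ENat.coe_ne_top k')
    · -- the A path: the only enabled action at the end is a̅ss(readyA,true)
      obtain ⟨h1, h2, _⟩ := h
      have hne : k' + k ≠ 0 := by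
        rcases Nat.eq_zero_or_pos k with hk | hk
        · subst hk
          rw [h1] at hk'
          have : ((1:ℕ) : ℕ∞) = (k' : ℕ∞) := by simpa using hk'
          have : (1:ℕ) = k' := Nat.cast_inj.mp this
          omega
        · omega
      rw [h2 k', show As (k'+k) = A1 from if_neg hne] at htr
      unfold A1 at htr
      cases htr
      subst hY
      rfl
    · rw [h.1] at hk'; exact absurd hk'.symm (ENat.coe_ne_top k')
    · rw [h.1] at hk'; exact absurd hk'.symm (ENat.coe_ne_top k')
    · rw [h.1] at hk'; exact absurd hk'.symm (ENat.coe_ne_top k')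
    · rw [h.1] at hk'; exact absurd hk'.symm (ENat.coe_ne_top k')
  · -- par clause
    intro P Q hpq
    rcases hC with ⟨⟨k,h⟩,hY⟩|⟨⟨k,h⟩,hY⟩|⟨⟨k,h⟩,hY⟩|⟨⟨k,h⟩,hY⟩|⟨⟨k,h⟩,hY⟩|⟨⟨k,h⟩,hY⟩|⟨⟨k,h⟩,hY⟩|⟨h,hY⟩|⟨⟨k,h⟩,hY⟩|⟨h,hY⟩
    · rw [h.2.1 0] at hpq; exact absurd hpq (fun hpq => (nomatch hpq))
    · obtain ⟨πP, πQ, hd, hP, hQ⟩ := decomp1 h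
      refine ⟨πP, πQ, YA, ∅, ∅, ∅, hd,
        Or.inr (Or.inr (Or.inl ⟨⟨k, hP⟩, rfl⟩)),
        Or.inr (Or.inr (Or.inr (Or.inr (Or.inr (Or.inr (Or.inr (Or.inr (Or.inr
          ⟨hQ, rfl⟩)))))))),
        ⟨fun π _ => D π, SC_closed, Or.inr (Or.inr (Or.inl ⟨k, hP⟩))⟩,
        ⟨fun π _ => D π, SC_closed,
          Or.inr (Or.inr (Or.inr (Or.inr (Or.inr (Or.inr (Or.inr (Or.inr (Or.inr hQ))))))))⟩,
        ?_, fun a _ => Set.notMem_empty _, fun a _ => Set.notMem_empty _,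
        sig_triv, sig_triv⟩
      subst hY
      rintro x (hx | hx)
      · rw [Set.mem_singleton_iff.mp hx]
        exact Or.inr mem_actsOf_YA
      · exact absurd hx (Set.notMem_empty x)
    · obtain ⟨πP, πQ, hd, hP, hQ⟩ := decompL4 h
      refine ⟨πP, πQ, YA, ∅, ∅, ∅, hd,
        Or.inr (Or.inr (Or.inr (Or.inl ⟨⟨k, hP⟩, rfl⟩))),
        Or.inr (Or.inr (Or.inr (Or.inr (Or.inr (Or.inr (Or.inr (Or.inr (Or.inl
          ⟨⟨GRB k, hQ⟩, rfl⟩)))))))),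
        ⟨fun π _ => D π, SC_closed, Or.inr (Or.inr (Or.inr (Or.inl ⟨k, hP⟩)))⟩,
        ⟨fun π _ => D π, SC_closed,
          Or.inr (Or.inr (Or.inr (Or.inr (Or.inr (Or.inr (Or.inr (Or.inr (Or.inl
            ⟨GRB k, hQ⟩))))))))⟩,
        by subst hY; simp, fun a _ => Set.notMem_empty _, fun a _ => Set.notMem_empty _,
        sig_triv, sig_triv⟩
    · obtain ⟨πP, πQ, hd, hP, hQ⟩ := decompL3 h
      refine ⟨πP, πQ, YA, ∅, ∅, ∅, hd,
        Or.inr (Or.inr (Or.inr (Or.inr (Or.inl ⟨⟨k, hP⟩, rfl⟩)))),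
        Or.inr (Or.inr (Or.inr (Or.inr (Or.inr (Or.inr (Or.inr (Or.inl ⟨hQ, rfl⟩))))))),
        ⟨fun π _ => D π, SC_closed, Or.inr (Or.inr (Or.inr (Or.inr (Or.inl ⟨k, hP⟩))))⟩,
        ⟨fun π _ => D π, SC_closed,
          Or.inr (Or.inr (Or.inr (Or.inr (Or.inr (Or.inr (Or.inr (Or.inl hQ)))))))⟩,
        by subst hY; simp, fun a _ => Set.notMem_empty _, fun a _ => Set.notMem_empty _,
        sig_triv, sig_triv⟩
    · obtain ⟨πP, πQ, hd, hP, hQ⟩ := decompL2 h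
      refine ⟨πP, πQ, YA, ∅, ∅, ∅, hd,
        Or.inr (Or.inr (Or.inr (Or.inr (Or.inr (Or.inl ⟨⟨GA k, hP⟩, rfl⟩))))),
        Or.inr (Or.inr (Or.inr (Or.inr (Or.inr (Or.inr (Or.inl ⟨⟨GB k, hQ⟩, rfl⟩)))))),
        ⟨fun π _ => D π, SC_closed,
          Or.inr (Or.inr (Or.inr (Or.inr (Or.inr (Or.inl ⟨GA k, hP⟩)))))⟩,
        ⟨fun π _ => D π, SC_closed,
          Or.inr (Or.inr (Or.inr (Or.inr (Or.inr (Or.inr (Or.inl ⟨GB k, hQ⟩))))))⟩,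
        by subst hY; simp, fun a _ => Set.notMem_empty _, fun a _ => Set.notMem_empty _,
        sig_triv, sig_triv⟩
    · rw [h.2.1 0] at hpq; exact absurd hpq ((seq_As _).1 P Q)
    · rw [h.2.1 0] at hpq; exact absurd hpq ((seq_bstate _).1 P Q)
    · rw [h.2.1 0] at hpq; exact absurd hpq ((seq_ident _).1 P Q)
    · rw [h.2.1 0] at hpq; exact absurd hpq ((seq_rbs _).1 P Q)
    · rw [h.2.1 0] at hpq; exact absurd hpq ((seq_ident _).1 P Q)
  · -- res clause
    intro P L' hres
    rcases hC with ⟨⟨k,h⟩,hY⟩|⟨⟨k,h⟩,hY⟩|⟨⟨k,h⟩,hY⟩|⟨⟨k,h⟩,hY⟩|⟨⟨k,h⟩,hY⟩|⟨⟨k,h⟩,hY⟩|⟨⟨k,h⟩,hY⟩|⟨h,hY⟩|⟨⟨k,h⟩,hY⟩|⟨h,hY⟩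
    · rw [h.2.1 0] at hres
      unfold Stop at hres
      injection hres with hP hL
      refine ⟨pi1 k, ⟨h.1.symm, fun n _ => ?_, fun n _ => (h.2.2 n).symm⟩,
        Or.inr (Or.inl ⟨⟨k, M1_pi1 k⟩, ?_⟩)⟩
      · rw [h.2.1 n, ← hL]
        rfl
      · rw [hY, ← hL]
    · rw [h.2.1 0] at hres; exact absurd hres (fun hres => (nomatch hres))
    · rw [h.2.1 0] at hres; exact absurd hres (fun hres => (nomatch hres))
    · rw [h.2.1 0] at hres; exact absurd hres (fun hres => (nomatch hres))
    · rw [h.2.1 0] at hres; exact absurd hres (fun hres => (nomatch hres))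
    · rw [h.2.1 0] at hres; exact absurd hres ((seq_As _).2.1 P L')
    · rw [h.2.1 0] at hres; exact absurd hres ((seq_bstate _).2.1 P L')
    · rw [h.2.1 0] at hres; exact absurd hres ((seq_ident _).2.1 P L')
    · rw [h.2.1 0] at hres; exact absurd hres ((seq_rbs _).2.1 P L')
    · rw [h.2.1 0] at hres; exact absurd hres ((seq_ident _).2.1 P L')
  · -- rel clause
    intro P f g hrel
    rcases hC with ⟨⟨k,h⟩,hY⟩|⟨⟨k,h⟩,hY⟩|⟨⟨k,h⟩,hY⟩|⟨⟨k,h⟩,hY⟩|⟨⟨k,h⟩,hY⟩|⟨⟨k,h⟩,hY⟩|⟨⟨k,h⟩,hY⟩|⟨h,hY⟩|⟨⟨k,h⟩,hY⟩|⟨h,hY⟩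
    · rw [h.2.1 0] at hrel; exact absurd hrel (fun hrel => (nomatch hrel))
    · rw [h.2.1 0] at hrel; exact absurd hrel (fun hrel => (nomatch hrel))
    · rw [h.2.1 0] at hrel; exact absurd hrel (fun hrel => (nomatch hrel))
    · rw [h.2.1 0] at hrel; exact absurd hrel (fun hrel => (nomatch hrel))
    · rw [h.2.1 0] at hrel; exact absurd hrel (fun hrel => (nomatch hrel))
    · rw [h.2.1 0] at hrel; exact absurd hrel ((seq_As _).2.2 P f g)
    · rw [h.2.1 0] at hrel; exact absurd hrel ((seq_bstate _).2.2 P f g)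
    · rw [h.2.1 0] at hrel; exact absurd hrel ((seq_ident _).2.2 P f g)
    · rw [h.2.1 0] at hrel; exact absurd hrel ((seq_rbs _).2.2 P f g)
    · rw [h.2.1 0] at hrel; exact absurd hrel ((seq_ident _).2.2 P f g)
  · -- drop clause
    intro j
    rcases hC with ⟨⟨k,h⟩,hY⟩|⟨⟨k,h⟩,hY⟩|⟨⟨k,h⟩,hY⟩|⟨⟨k,h⟩,hY⟩|⟨⟨k,h⟩,hY⟩|⟨⟨k,h⟩,hY⟩|⟨⟨k,h⟩,hY⟩|⟨h,hY⟩|⟨⟨k,h⟩,hY⟩|⟨h,hY⟩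
    · exact Or.inl ⟨⟨k+j, MTop_drop h j⟩, hY⟩
    · exact Or.inr (Or.inl ⟨⟨k+j, M1_drop h j⟩, hY⟩)
    · exact Or.inr (Or.inr (Or.inl ⟨⟨k+j, ML4_drop h j⟩, hY⟩))
    · exact Or.inr (Or.inr (Or.inr (Or.inl ⟨⟨k+j, ML3_drop h j⟩, hY⟩)))
    · exact Or.inr (Or.inr (Or.inr (Or.inr (Or.inl ⟨⟨k+j, ML2_drop h j⟩, hY⟩))))
    · exact Or.inr (Or.inr (Or.inr (Or.inr (Or.inr (Or.inl ⟨⟨k+j, MA_drop h j⟩, hY⟩)))))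
    · exact Or.inr (Or.inr (Or.inr (Or.inr (Or.inr (Or.inr (Or.inl
        ⟨⟨k+j, MB_drop h j⟩, hY⟩))))))
    · exact Or.inr (Or.inr (Or.inr (Or.inr (Or.inr (Or.inr (Or.inr (Or.inl
        ⟨MRA_drop h j, hY⟩)))))))
    · exact Or.inr (Or.inr (Or.inr (Or.inr (Or.inr (Or.inr (Or.inr (Or.inr (Or.inl
        ⟨⟨k+j, MRB_drop h j⟩, hY⟩))))))))
    · exact Or.inr (Or.inr (Or.inr (Or.inr (Or.inr (Or.inr (Or.inr (Or.inr (Or.inr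
        ⟨MT_drop h j, hY⟩))))))))

end LivenessProof5

/-- in the CCS rendering there is an ∅-just (hence just) infinite
path on which noncritA occurs but critA never occurs (A halts just before
writing readyA while B cycles forever reading readyA = false), so the CCS
rendering fails liveness under justness. -/
theorem ccs_peterson_liveness_fails :
    ∃ π : Path env, π.state 0 = Sys ∧ π.len = ⊤ ∧ Just env π ∅ ∧ IsJust env π ∧
      (∃ n : ℕ, π.act n = .name .noncritA) ∧
      (∀ n : ℕ, π.act n ≠ .name .critA) := by
  have hjust : Just env piTop ∅ := ⟨CJ, CJ_closed, Or.inl ⟨⟨0, MTop_piTop⟩, rfl⟩⟩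
  refine ⟨piTop, ?_, rfl, hjust, ⟨∅, Set.notMem_empty _, hjust⟩, ⟨0, rfl⟩, ?_⟩
  · rfl
  · intro n h
    show False
    have h' : topact n = .name .critA := h
    unfold topact actL4 actL3 actL2 bact at h'
    split_ifs at h' with h1 h2 h3 h4
    all_goals try (injection h' with h''; exact PN.noConfusion h'')
    all_goals
      (have h6 : (n-1) % 6 < 6 := by omega
       set r := (n-1) % 6 with hr
       clear_value r
       interval_cases r <;> simp [ba] at h')

end PetersonCCS
end CCSS
end

section
/- In Peterson's filter-lock algorithm for N = 3 processes under a sequentially consistent memory with blocking writes (a write to a variable can be delayed indefinitely while other processes write to it), there is an execution, compatible with progress and justness, in which Process A is stuck forever at the instruction writing last[1], while Processes B and C alternately enter the critical section infinitely often; hence the filter lock fails liveness without a fairness assumption on writes. -/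
namespace FilterLockSC

/-- Program counters of a process in Peterson's filter lock for N = 3 under a
sequentially consistent memory with atomic but blocking writes: a process at
`wlast j` is waiting to perform the write last[j] := i, which may be delayed
indefinitely while other processes write to the same variable. -/
inductive PC
  | noncrit
  | setRoom (j : ℕ)  -- about to execute room[i] := j
  | wlast (j : ℕ)    -- trying to write last[j] := i
  | await (j : ℕ)    -- at the await of round j
  | crit
  | reset            -- about to execute room[i] := 0

structure St where
  pc : Fin 3 → PC
  room : Fin 3 → ℕ
  last : ℕ → Fin 3

/-- Small-step semantics with atomic writes to last[j]. -/
inductive Step : St → St → Prop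
  | leave (s : St) (i : Fin 3) : s.pc i = .noncrit →
      Step s { s with pc := Function.update s.pc i (.setRoom 1) }
  | setRoom (s : St) (i : Fin 3) (j : ℕ) : s.pc i = .setRoom j →
      Step s { pc := Function.update s.pc i (.wlast j),
               room := Function.update s.room i j, last := s.last }
  | writeLast (s : St) (i : Fin 3) (j : ℕ) : s.pc i = .wlast j →
      Step s { pc := Function.update s.pc i (.await j),
               room := s.room, last := Function.update s.last j i }
  | passAwait (s : St) (i : Fin 3) (j : ℕ) : s.pc i = .await j →
      (s.last j ≠ i ∨ ∀ k : Fin 3, k ≠ i → s.room k < j) →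
      Step s { s with
        pc := Function.update s.pc i (if j < 2 then .setRoom (j + 1) else .crit) }
  | exitCrit (s : St) (i : Fin 3) : s.pc i = .crit →
      Step s { s with pc := Function.update s.pc i .reset }
  | resetRoom (s : St) (i : Fin 3) : s.pc i = .reset →
      Step s { pc := Function.update s.pc i .noncrit,
               room := Function.update s.room i 0, last := s.last }

/-- Initial state: Process A = 0 is in room 1, about to write last[1]; the
other processes are noncritical. -/
def init : St :=
  { pc := fun i => if i = 0 then .wlast 1 else .noncrit,
    room := fun i => if i = 0 then 1 else 0,
    last := fun _ => 0 }

deriving instance DecidableEq for PC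

/- The explicit schedule: A stays at `wlast 1` forever; B and C alternate. -/
def s0 : St := init
def s1 : St := { s0 with pc := Function.update s0.pc 1 (.setRoom 1) }
def s2 : St := { pc := Function.update s1.pc 1 (.wlast 1),
                 room := Function.update s1.room 1 1, last := s1.last }
def s3 : St := { pc := Function.update s2.pc 1 (.await 1),
                 room := s2.room, last := Function.update s2.last 1 1 }
def s4 : St := { s3 with pc := Function.update s3.pc 2 (.setRoom 1) }
def s5 : St := { pc := Function.update s4.pc 2 (.wlast 1),
                 room := Function.update s4.room 2 1, last := s4.last }
def s6 : St := { pc := Function.update s5.pc 2 (.await 1),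
                 room := s5.room, last := Function.update s5.last 1 2 }
def s7 : St := { s6 with pc := Function.update s6.pc 1 (.setRoom 2) }
def s8 : St := { pc := Function.update s7.pc 1 (.wlast 2),
                 room := Function.update s7.room 1 2, last := s7.last }
def s9 : St := { pc := Function.update s8.pc 1 (.await 2),
                 room := s8.room, last := Function.update s8.last 2 1 }
def s10 : St := { s9 with pc := Function.update s9.pc 1 .crit }
def s11 : St := { s10 with pc := Function.update s10.pc 1 .reset }
def s12 : St := { pc := Function.update s11.pc 1 .noncrit,
                  room := Function.update s11.room 1 0, last := s11.last }
def s13 : St := { s12 with pc := Function.update s12.pc 1 (.setRoom 1) }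
def s14 : St := { pc := Function.update s13.pc 1 (.wlast 1),
                  room := Function.update s13.room 1 1, last := s13.last }
def s15 : St := { pc := Function.update s14.pc 1 (.await 1),
                  room := s14.room, last := Function.update s14.last 1 1 }
def s16 : St := { s15 with pc := Function.update s15.pc 2 (.setRoom 2) }
def s17 : St := { pc := Function.update s16.pc 2 (.wlast 2),
                  room := Function.update s16.room 2 2, last := s16.last }
def s18 : St := { pc := Function.update s17.pc 2 (.await 2),
                  room := s17.room, last := Function.update s17.last 2 2 }
def s19 : St := { s18 with pc := Function.update s18.pc 2 .crit }
def s20 : St := { s19 with pc := Function.update s19.pc 2 .reset }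
def s21 : St := { pc := Function.update s20.pc 2 .noncrit,
                  room := Function.update s20.room 2 0, last := s20.last }
def s22 : St := { s21 with pc := Function.update s21.pc 2 (.setRoom 1) }
def s23 : St := { pc := Function.update s22.pc 2 (.wlast 1),
                  room := Function.update s22.room 2 1, last := s22.last }
def s24 : St := { pc := Function.update s23.pc 2 (.await 1),
                  room := s23.room, last := Function.update s23.last 1 2 }
def s25 : St := { s24 with pc := Function.update s24.pc 1 (.setRoom 2) }
def s26 : St := { pc := Function.update s25.pc 1 (.wlast 2),
                  room := Function.update s25.room 1 2, last := s25.last }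
def s27 : St := { pc := Function.update s26.pc 1 (.await 2),
                  room := s26.room, last := Function.update s26.last 2 1 }

def stlist : ℕ → St
  | 0 => s0 | 1 => s1 | 2 => s2 | 3 => s3 | 4 => s4 | 5 => s5 | 6 => s6
  | 7 => s7 | 8 => s8 | 9 => s9 | 10 => s10 | 11 => s11 | 12 => s12
  | 13 => s13 | 14 => s14 | 15 => s15 | 16 => s16 | 17 => s17 | 18 => s18
  | 19 => s19 | 20 => s20 | 21 => s21 | 22 => s22 | 23 => s23 | 24 => s24
  | 25 => s25 | 26 => s26 | 27 => s27 | _ => s0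

def mypath (n : ℕ) : St := if n ≤ 9 then stlist n else stlist (9 + (n - 9) % 18)

lemma loop_eq : s27 = s9 := by
  have hpc : s27.pc = s9.pc := by funext i; fin_cases i <;> rfl
  have hr : s27.room = s9.room := by funext i; fin_cases i <;> rfl
  have hl : s27.last = s9.last := by
    funext j
    by_cases h1 : j = 1
    · subst h1; rfl
    by_cases h2 : j = 2
    · subst h2; rfl
    · simp [s27, s26, s25, s24, s23, s22, s21, s20, s19, s18, s17, s16, s15,
        s14, s13, s12, s11, s10, s9, s8, s7, s6, s5, s4, s3, s2, s1, s0, init,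
        Function.update_apply, h1, h2]
  calc s27 = ⟨s27.pc, s27.room, s27.last⟩ := rfl
    _ = ⟨s9.pc, s9.room, s9.last⟩ := by rw [hpc, hr, hl]
    _ = s9 := rfl

lemma step_succ : ∀ k, k < 27 → Step (stlist k) (stlist (k + 1)) := by
  intro k hk
  interval_cases k
  · exact .leave s0 1 rfl
  · exact .setRoom s1 1 1 rfl
  · exact .writeLast s2 1 1 rfl
  · exact .leave s3 2 rfl
  · exact .setRoom s4 2 1 rfl
  · exact .writeLast s5 2 1 rfl
  · exact .passAwait s6 1 1 rfl (Or.inl (by decide))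
  · exact .setRoom s7 1 2 rfl
  · exact .writeLast s8 1 2 rfl
  · exact .passAwait s9 1 2 rfl (Or.inr (by decide))
  · exact .exitCrit s10 1 rfl
  · exact .resetRoom s11 1 rfl
  · exact .leave s12 1 rfl
  · exact .setRoom s13 1 1 rfl
  · exact .writeLast s14 1 1 rfl
  · exact .passAwait s15 2 1 rfl (Or.inl (by decide))
  · exact .setRoom s16 2 2 rfl
  · exact .writeLast s17 2 2 rfl
  · exact .passAwait s18 2 2 rfl (Or.inr (by decide))
  · exact .exitCrit s19 2 rfl
  · exact .resetRoom s20 2 rfl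
  · exact .leave s21 2 rfl
  · exact .setRoom s22 2 1 rfl
  · exact .writeLast s23 2 1 rfl
  · exact .passAwait s24 1 1 rfl (Or.inl (by decide))
  · exact .setRoom s25 1 2 rfl
  · exact .writeLast s26 1 2 rfl

lemma pcA_all : ∀ k ≤ 27, (stlist k).pc 0 = .wlast 1 := by
  intro k hk; interval_cases k <;> rfl

/-- under sequential consistency with blocking writes, the filter
lock for N = 3 fails liveness without fairness: there is an infinite execution,
compatible with progress (the run is infinite) and justness (processes B = 1
and C = 2 act and enter the critical section infinitely often, while A's
pending write of last[1] is forever pre-empted because last[1] is infinitely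
often being written by the other processes), on which A = 0 is stuck forever
at the write to last[1]. -/
theorem filter_lock_liveness_fails :
    ∃ path : ℕ → St, path 0 = init ∧
      (∀ n, Step (path n) (path (n + 1))) ∧
      (∀ n, (path n).pc 0 = .wlast 1) ∧
      (∀ m, ∃ n, m ≤ n ∧ (path n).pc 1 = .crit) ∧
      (∀ m, ∃ n, m ≤ n ∧ (path n).pc 2 = .crit) ∧
      (∀ m, ∃ n, m ≤ n ∧ ∃ i : Fin 3, i ≠ 0 ∧
        (path n).pc i = .wlast 1 ∧ (path (n + 1)).pc i = .await 1) := by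
  refine ⟨mypath, rfl, ?_, ?_, ?_, ?_, ?_⟩
  · -- steps
    intro n
    rcases lt_or_ge n 9 with h | h
    · have hp : mypath n = stlist n := if_pos (le_of_lt h)
      have hp' : mypath (n + 1) = stlist (n + 1) := if_pos (by omega)
      rw [hp, hp']
      exact step_succ n (by omega)
    · have hr : (n - 9) % 18 < 18 := Nat.mod_lt _ (by norm_num)
      have hp : mypath n = stlist (9 + (n - 9) % 18) := by
        unfold mypath
        rcases eq_or_lt_of_le h with h' | h'
        · subst h'; norm_num
        · rw [if_neg (by omega)]
      by_cases h17 : (n - 9) % 18 = 17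
      · have hp' : mypath (n + 1) = stlist 9 := by
          unfold mypath
          rw [if_neg (by omega)]
          congr 1
          omega
        rw [hp, hp', h17]
        have := step_succ 26 (by norm_num)
        have e : stlist 27 = stlist 9 := loop_eq
        rw [e] at this
        exact this
      · have hp' : mypath (n + 1) = stlist (9 + ((n - 9) % 18 + 1)) := by
          unfold mypath
          rw [if_neg (by omega)]
          congr 1
          omega
        rw [hp, hp']
        have := step_succ (9 + (n - 9) % 18) (by omega)
        exact this
  · -- A stuck
    intro n
    unfold mypath
    split
    · exact pcA_all n (by omega)
    · exact pcA_all _ (by omega)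
  · -- B crit i.o.
    intro m
    refine ⟨18 * m + 10, by omega, ?_⟩
    have : mypath (18 * m + 10) = stlist 10 := by
      unfold mypath
      rw [if_neg (by omega)]
      congr 1
      omega
    rw [this]; rfl
  · -- C crit i.o.
    intro m
    refine ⟨18 * m + 19, by omega, ?_⟩
    have : mypath (18 * m + 19) = stlist 19 := by
      unfold mypath
      rw [if_neg (by omega)]
      congr 1
      omega
    rw [this]; rfl
  · -- last[1] written i.o. by B
    intro m
    refine ⟨18 * m + 14, by omega, 1, by decide, ?_, ?_⟩
    · have : mypath (18 * m + 14) = stlist 14 := by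
        unfold mypath
        rw [if_neg (by omega)]
        congr 1
        omega
      rw [this]; rfl
    · have : mypath (18 * m + 14 + 1) = stlist 15 := by
        unfold mypath
        rw [if_neg (by omega)]
        congr 1
        omega
      rw [this]; rfl

end FilterLockSC
end
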